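/- arXiv:1712.01206 — 6 statements merged into one kernel-verified Lean document; each statement's English description precedes it below -/
import Mathlib

section
/- For all n ≥ 0 and all 0 ≤ k ≤ n+1, the Lebesgue measure of the set {(x,y) ∈ [0,1)² : ∑_{j=0}^{n} r_{j+1}(x)·r_{n+1-j}(y) = n+1-2k} equals 2^{-(n+1)}·C(n+1, k), where r_j(t) = 1 if the j-th binary digit of t is 1 and -1 otherwise. -/
open MeasureTheory Finset

noncomputable section

/-- The dyadic interval `[m·2^{-k}, (m+1)·2^{-k})`. -/
def dyadicI (k m : ℕ) : Set ℝ :=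
  Set.Ico ((m : ℝ) * (2:ℝ)^(-(k:ℤ))) (((m : ℝ) + 1) * (2:ℝ)^(-(k:ℤ)))

/-- The Haar function of the dyadic interval `[m·2^{-k}, (m+1)·2^{-k})`:
`-1` on the left half, `+1` on the right half, `0` outside. -/
def haarI (k m : ℕ) (x : ℝ) : ℝ :=
  if x ∈ Set.Ico ((m : ℝ) * (2:ℝ)^(-(k:ℤ))) (((m : ℝ) + 1/2) * (2:ℝ)^(-(k:ℤ))) then -1
  else if x ∈ Set.Ico (((m : ℝ) + 1/2) * (2:ℝ)^(-(k:ℤ))) (((m : ℝ) + 1) * (2:ℝ)^(-(k:ℤ))) then 1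
  else 0

/-- The Haar function of the dyadic rectangle `[m·2^{-k},(m+1)·2^{-k}) × [m'·2^{-j},(m'+1)·2^{-j})`. -/
def haarR (k m j m' : ℕ) (p : ℝ × ℝ) : ℝ := haarI k m p.1 * haarI j m' p.2

/-- The signed small ball sum `∑_{|R| = 2^{-n}} ε_R h_R`, where the rectangle of the layer `k`
with horizontal index `m` and vertical index `m'` carries the sign `ε k m m'`. -/
def signedSum (n : ℕ) (ε : ℕ → ℕ → ℕ → ℝ) (p : ℝ × ℝ) : ℝ :=
  ∑ k ∈ Finset.range (n+1), ∑ m ∈ Finset.range (2^k), ∑ m' ∈ Finset.range (2^(n-k)),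
    ε k m m' * haarR k m (n-k) m' p

/-- `rad j t = 1` if the `j`-th binary digit `⌊2^j t⌋ mod 2` of `t` is `1`, `-1` otherwise. -/
def rad (j : ℕ) (t : ℝ) : ℝ := if ⌊(2:ℝ)^j * t⌋ % 2 = 1 then 1 else -1

lemma two_zpow_neg (N : ℕ) : (2:ℝ)^(-(N:ℤ)) = ((2:ℝ)^N)⁻¹ := by
  rw [zpow_neg, zpow_natCast]

lemma mem_dyadicI_iff {N m : ℕ} {x : ℝ} :
    x ∈ dyadicI N m ↔ (m:ℝ) ≤ 2^N * x ∧ 2^N * x < m + 1 := by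
  have h2 : (0:ℝ) < 2^N := by positivity
  simp only [dyadicI, Set.mem_Ico, two_zpow_neg]
  rw [mul_inv_le_iff₀ h2, lt_mul_inv_iff₀ h2]
  constructor <;> rintro ⟨h1', h2'⟩ <;> constructor <;> nlinarith

lemma dyadicI_subset {N m : ℕ} (hm : m < 2^N) : dyadicI N m ⊆ Set.Ico (0:ℝ) 1 := by
  intro x hx
  rw [mem_dyadicI_iff] at hx
  have h2 : (0:ℝ) < 2^N := by positivity
  have hm' : (m:ℝ) + 1 ≤ 2^N := by exact_mod_cast hm
  constructor
  · nlinarith [hx.1, Nat.cast_nonneg (α := ℝ) m]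
  · nlinarith [hx.2]

lemma exists_dyadicI {N : ℕ} {x : ℝ} (hx : x ∈ Set.Ico (0:ℝ) 1) :
    ∃ m < 2^N, x ∈ dyadicI N m := by
  have h2 : (0:ℝ) < 2^N := by positivity
  obtain ⟨hx0, hx1⟩ := hx
  refine ⟨⌊2^N * x⌋.toNat, ?_, ?_⟩
  · have h1 : (2:ℝ)^N * x < 2^N := by nlinarith
    have h0 : (0:ℤ) ≤ ⌊(2:ℝ)^N * x⌋ := Int.floor_nonneg.2 (by positivity)
    have h2N : ⌊(2:ℝ)^N * x⌋ < (2^N : ℤ) := Int.floor_lt.2 (by push_cast; exact h1)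
    have h3 : ((2^N : ℕ) : ℤ) = 2^N := by push_cast; ring
    omega
  · rw [mem_dyadicI_iff]
    have h0 : (0:ℤ) ≤ ⌊(2:ℝ)^N * x⌋ := Int.floor_nonneg.2 (by positivity)
    have h1 : (⌊(2:ℝ)^N * x⌋.toNat : ℝ) = (⌊(2:ℝ)^N * x⌋ : ℝ) := by
      exact_mod_cast congrArg Int.cast (Int.toNat_of_nonneg h0)
    rw [h1]
    exact ⟨Int.floor_le _, Int.lt_floor_add_one _⟩

lemma floor_eq_div {N j m : ℕ} (hj : j ≤ N) {x : ℝ} (hx : x ∈ dyadicI N m) :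
    ⌊(2:ℝ)^j * x⌋ = (m / 2^(N-j) : ℕ) := by
  rw [mem_dyadicI_iff] at hx
  set s := N - j with hs
  set q := m / 2^s with hqdef
  have hqm : q * 2^s ≤ m := Nat.div_mul_le_self m _
  have hqm2 : m < (q+1) * 2^s := by
    have h1 := Nat.mod_lt m (show 0 < 2^s by positivity)
    have h2 := Nat.div_add_mod m (2^s)
    have h3 : (q+1) * 2^s = 2^s * (m / 2^s) + 2^s := by rw [hqdef]; ring
    omega
  have hpow : (2:ℝ)^N = 2^j * 2^s := by
    rw [← pow_add]; congr 1; omega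
  have h2s : (0:ℝ) < 2^s := by positivity
  have hc1 : ((q:ℝ)) * 2^s ≤ (m:ℝ) := by exact_mod_cast hqm
  have hc2 : (m:ℝ) + 1 ≤ ((q:ℝ)+1) * 2^s := by exact_mod_cast hqm2
  have e1 : (2:ℝ)^N * x = (2^j * x) * 2^s := by rw [hpow]; ring
  rw [Int.floor_eq_iff]
  constructor
  · push_cast
    have h5 : (q:ℝ) * 2^s ≤ (2^j * x) * 2^s := by rw [← e1]; linarith [hx.1, hc1]
    exact le_of_mul_le_mul_right h5 h2s
  · push_cast
    have h5 : (2^j * x) * 2^s < ((q:ℝ)+1) * 2^s := by rw [← e1]; linarith [hx.2, hc2]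
    exact lt_of_mul_lt_mul_right h5 h2s.le

lemma rad_eq_testBit {N j m : ℕ} (hj : j ≤ N) {x : ℝ} (hx : x ∈ dyadicI N m) :
    rad j x = if m.testBit (N-j) then 1 else -1 := by
  rw [rad, floor_eq_div hj hx]
  have h : (((m / 2^(N-j) : ℕ) : ℤ) % 2 = 1) ↔ (m.testBit (N-j) = true) := by
    rw [Nat.testBit_eq_decide_div_mod_eq, decide_eq_true_iff]
    omega
  exact if_congr h rfl rfl

lemma sum_bool_lt (N : ℕ) (f : ℕ → Bool) : (∑ j ∈ range N, (f j).toNat * 2^j) < 2^N := by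
  induction N with
  | zero => simp
  | succ N ih =>
    rw [Finset.sum_range_succ]
    have : (f N).toNat * 2^N ≤ 2^N := by
      have : (f N).toNat ≤ 1 := Bool.toNat_le _
      calc (f N).toNat * 2^N ≤ 1 * 2^N := Nat.mul_le_mul_right _ this
        _ = 2^N := one_mul _
    have h2 : 2^(N+1) = 2^N + 2^N := by ring
    omega

lemma testBit_sum (N : ℕ) (f : ℕ → Bool) (i : ℕ) :
    (∑ j ∈ range N, (f j).toNat * 2^j).testBit i = (decide (i < N) && f i) := by
  induction N with
  | zero => simp
  | succ N ih =>
    rw [Finset.sum_range_succ]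
    have hb := sum_bool_lt N f
    have hre : (∑ j ∈ range N, (f j).toNat * 2^j) + (f N).toNat * 2^N
        = 2^N * (f N).toNat + (∑ j ∈ range N, (f j).toNat * 2^j) := by ring
    rw [hre, Nat.testBit_two_pow_mul_add _ hb i]
    by_cases h : i < N
    · simp [h, ih, Nat.lt_succ_of_lt h]
    · by_cases h2 : i = N
      · subst h2
        simp only [Nat.testBit_bool_toNat]
        cases f i <;> simp
      · have h3 : ¬ (i < N + 1) := by omega
        have h4 : i - N ≠ 0 := by omega
        simp [h, h3, Nat.testBit_bool_toNat, h4]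

lemma count_mismatch (N k : ℕ) (b : ℕ → Bool) :
    ((range (2^N)).filter
      (fun m => ((range N).filter (fun i => m.testBit i ≠ b i)).card = k)).card
      = N.choose k := by
  classical
  have hpc := Finset.card_powersetCard k (range N)
  rw [Finset.card_range] at hpc
  rw [← hpc]
  apply Finset.card_bij'
    (i := fun m _ => (range N).filter (fun i => m.testBit i ≠ b i))
    (j := fun T _ => ∑ i ∈ range N, ((decide (i ∈ T)).xor (b i)).toNat * 2^i)
  · intro m hm
    rw [Finset.mem_powersetCard]
    exact ⟨Finset.filter_subset _ _, (Finset.mem_filter.1 hm).2⟩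
  · intro T hT
    rw [Finset.mem_powersetCard] at hT
    rw [Finset.mem_filter]
    have hmem : ∀ i, ((∑ i ∈ range N, ((decide (i ∈ T)).xor (b i)).toNat * 2^i).testBit i)
        = (decide (i < N) && ((decide (i ∈ T)).xor (b i))) := fun i => testBit_sum N _ i
    constructor
    · rw [Finset.mem_range]; exact sum_bool_lt N _
    · have : (range N).filter
          (fun i => (∑ i ∈ range N, ((decide (i ∈ T)).xor (b i)).toNat * 2^i).testBit i ≠ b i) = T := by
        ext i
        rw [Finset.mem_filter, Finset.mem_range, hmem i]
        constructor
        · rintro ⟨hiN, hne⟩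
          simp only [hiN, decide_true, Bool.true_and] at hne
          by_contra hiT
          simp [hiT] at hne
        · intro hiT
          have hiN : i < N := Finset.mem_range.1 (hT.1 hiT)
          refine ⟨hiN, ?_⟩
          simp only [hiN, decide_true, Bool.true_and, hiT]
          cases b i <;> simp
      rw [this]; exact hT.2
  · intro m hm
    rw [Finset.mem_filter, Finset.mem_range] at hm
    apply Nat.eq_of_testBit_eq
    intro i
    rw [testBit_sum N _ i]
    by_cases h : i < N
    · simp only [h, decide_true, Bool.true_and, Finset.mem_filter, Finset.mem_range]
      by_cases h2 : m.testBit i = b i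
      · simp [h2, h]
      · simp only [h, h2, true_and, not_false_iff, decide_true]
        cases hb : b i <;> simp [h2, hb] <;> simp [hb] at h2 <;>
          simp [Bool.eq_false_iff, h2] at * <;> tauto
    · have : m.testBit i = false :=
        Nat.testBit_lt_two_pow (lt_of_lt_of_le hm.1 (Nat.pow_le_pow_right (by norm_num) (by omega)))
      simp [h, this]
  · intro T hT
    rw [Finset.mem_powersetCard] at hT
    ext i
    rw [Finset.mem_filter, Finset.mem_range, testBit_sum N _ i]
    constructor
    · rintro ⟨hiN, hne⟩
      simp only [hiN, decide_true, Bool.true_and] at hne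
      by_contra hiT
      simp [hiT] at hne
    · intro hiT
      have hiN : i < N := Finset.mem_range.1 (hT.1 hiT)
      refine ⟨hiN, ?_⟩
      simp only [hiN, decide_true, Bool.true_and, hiT]
      cases b i <;> simp

lemma sum_ite_neg_one (N : ℕ) (c : ℕ → Prop) [DecidablePred c] :
    ∑ j ∈ range N, (if c j then (-1:ℝ) else 1) = (N:ℝ) - 2 * ((range N).filter c).card := by
  rw [Finset.sum_ite, Finset.sum_const, Finset.sum_const]
  have h := Finset.card_filter_add_card_filter_not (s := range N) (p := c)
  rw [Finset.card_range] at h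
  have h' : (((range N).filter c).card : ℝ) + (((range N).filter (fun j => ¬ c j)).card : ℝ)
      = (N:ℝ) := by exact_mod_cast h
  simp only [nsmul_eq_mul, mul_neg, mul_one]
  linarith

lemma sum_rad_eq {n : ℕ} {m m' : ℕ} {x y : ℝ}
    (hx : x ∈ dyadicI (n+1) m) (hy : y ∈ dyadicI (n+1) m') :
    ∑ j ∈ range (n+1), rad (j+1) x * rad (n+1-j) y
      = ((n:ℝ)+1) - 2 * ((range (n+1)).filter
          (fun j => m.testBit (n-j) ≠ m'.testBit j)).card := by
  classical
  have hsum : ∀ j ∈ range (n+1), rad (j+1) x * rad (n+1-j) y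
      = (if (m.testBit (n-j) ≠ m'.testBit j) then (-1:ℝ) else 1) := by
    intro j hj
    rw [Finset.mem_range] at hj
    rw [rad_eq_testBit (N := n+1) (by omega) hx, rad_eq_testBit (N := n+1) (by omega) hy]
    have e1 : n+1-(j+1) = n-j := by omega
    have e2 : n+1-(n+1-j) = j := by omega
    rw [e1, e2]
    cases m.testBit (n-j) <;> cases m'.testBit j <;> norm_num
  rw [Finset.sum_congr rfl hsum, sum_ite_neg_one]
  push_cast
  ring

lemma volume_dyadicI (N m : ℕ) : volume (dyadicI N m) = ENNReal.ofReal ((2:ℝ)^(-(N:ℤ))) := by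
  rw [dyadicI, Real.volume_Ico]
  congr 1
  ring

lemma dyadicI_disjoint {N m m' : ℕ} (h : m ≠ m') :
    Disjoint (dyadicI N m) (dyadicI N m') := by
  rw [Set.disjoint_left]
  intro x hx hx'
  rw [mem_dyadicI_iff] at hx hx'
  have h1 : (m:ℝ) < (m':ℝ) + 1 := lt_of_le_of_lt hx.1 hx'.2
  have h2 : (m':ℝ) < (m:ℝ) + 1 := lt_of_le_of_lt hx'.1 hx.2
  have h1' : m < m' + 1 := by exact_mod_cast h1
  have h2' : m' < m + 1 := by exact_mod_cast h2
  omega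

lemma reindex_card (n : ℕ) (m m' : ℕ) :
    ((range (n+1)).filter (fun j => m.testBit (n-j) ≠ m'.testBit j)).card
      = ((range (n+1)).filter (fun i => m.testBit i ≠ m'.testBit (n-i))).card := by
  classical
  apply Finset.card_bij' (i := fun j _ => n - j) (j := fun i _ => n - i)
  · intro j hj
    rw [Finset.mem_filter, Finset.mem_range] at hj ⊢
    have e : n - (n - j) = j := by omega
    exact ⟨by omega, by rw [e]; exact hj.2⟩
  · intro i hi
    rw [Finset.mem_filter, Finset.mem_range] at hi ⊢
    have e : n - (n - i) = i := by omega
    exact ⟨by omega, by rw [e]; exact hi.2⟩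
  · intro j hj
    rw [Finset.mem_filter, Finset.mem_range] at hj
    omega
  · intro i hi
    rw [Finset.mem_filter, Finset.mem_range] at hi
    omega

lemma card_F (n k : ℕ) :
    ((range (2^(n+1)) ×ˢ range (2^(n+1))).filter
      (fun q : ℕ × ℕ =>
        ((range (n+1)).filter (fun j => q.1.testBit (n-j) ≠ q.2.testBit j)).card = k)).card
    = 2^(n+1) * (n+1).choose k := by
  classical
  set N := n+1 with hN
  set F := ((range (2^N) ×ˢ range (2^N)).filter
      (fun q : ℕ × ℕ =>
        ((range N).filter (fun j => q.1.testBit (n-j) ≠ q.2.testBit j)).card = k)) with hF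
  have hfib : ∀ q ∈ F, q.2 ∈ range (2^N) := by
    intro q hq
    rw [hF, Finset.mem_filter, Finset.mem_product] at hq
    exact hq.1.2
  rw [Finset.card_eq_sum_card_fiberwise hfib]
  have hfibcard : ∀ m' ∈ range (2^N),
      (F.filter (fun q => q.2 = m')).card = N.choose k := by
    intro m' hm'
    have himg : F.filter (fun q => q.2 = m')
        = ((range (2^N)).filter (fun m =>
            ((range N).filter (fun j => m.testBit (n-j) ≠ m'.testBit j)).card = k)).image
            (fun m => (m, m')) := by
      ext ⟨a, b⟩
      simp only [hF, Finset.mem_filter, Finset.mem_product, Finset.mem_image, Finset.mem_range,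
        Prod.mk.injEq]
      constructor
      · rintro ⟨⟨⟨ha, hb⟩, hc⟩, rfl⟩
        exact ⟨a, ⟨ha, hc⟩, rfl, rfl⟩
      · rintro ⟨m, ⟨hm1, hm2⟩, rfl, rfl⟩
        exact ⟨⟨⟨hm1, Finset.mem_range.1 hm'⟩, hm2⟩, rfl⟩
    rw [himg, Finset.card_image_of_injective _ (fun a b h => (Prod.mk.injEq _ _ _ _ ▸ h).1)]
    have hcong : (range (2^N)).filter (fun m =>
          ((range N).filter (fun j => m.testBit (n-j) ≠ m'.testBit j)).card = k)
        = (range (2^N)).filter (fun m =>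
          ((range N).filter (fun i => m.testBit i ≠ m'.testBit (n-i))).card = k) := by
      apply Finset.filter_congr
      intro m _
      rw [reindex_card n m m']
    rw [hcong, count_mismatch N k (fun i => m'.testBit (n-i))]
  rw [Finset.sum_congr rfl hfibcard, Finset.sum_const, Finset.card_range, smul_eq_mul]
/-- Level sets of `∑_{j=0}^n r_{j+1}(x) r_{n+1-j}(y)` follow the binomial distribution. -/
theorem rad_sum_level_sets (n k : ℕ) (hk : k ≤ n + 1) :
    volume {p : ℝ × ℝ | p.1 ∈ Set.Ico (0:ℝ) 1 ∧ p.2 ∈ Set.Ico (0:ℝ) 1 ∧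
        ∑ j ∈ Finset.range (n+1), rad (j+1) p.1 * rad (n+1-j) p.2 = (n : ℝ) + 1 - 2 * k}
      = ENNReal.ofReal (((n+1).choose k : ℝ) / 2^(n+1)) := by
  classical
  set N := n + 1 with hN
  set F := ((range (2^N) ×ˢ range (2^N)).filter
      (fun q : ℕ × ℕ =>
        ((range N).filter (fun j => q.1.testBit (n-j) ≠ q.2.testBit j)).card = k)) with hF
  have hset : {p : ℝ × ℝ | p.1 ∈ Set.Ico (0:ℝ) 1 ∧ p.2 ∈ Set.Ico (0:ℝ) 1 ∧
        ∑ j ∈ Finset.range (n+1), rad (j+1) p.1 * rad (n+1-j) p.2 = (n : ℝ) + 1 - 2 * k}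
      = ⋃ q ∈ F, dyadicI N q.1 ×ˢ dyadicI N q.2 := by
    ext p
    simp only [Set.mem_setOf_eq, Set.mem_iUnion, exists_prop]
    constructor
    · rintro ⟨hx, hy, hsum⟩
      obtain ⟨m, hm, hxm⟩ := exists_dyadicI (N := N) hx
      obtain ⟨m', hm', hym⟩ := exists_dyadicI (N := N) hy
      refine ⟨(m, m'), ?_, Set.mk_mem_prod hxm hym⟩
      rw [hF, Finset.mem_filter, Finset.mem_product]
      refine ⟨⟨Finset.mem_range.2 hm, Finset.mem_range.2 hm'⟩, ?_⟩
      have heq := (sum_rad_eq hxm hym).symm.trans hsum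
      have : ((((range (n+1)).filter
          (fun j => m.testBit (n-j) ≠ m'.testBit j)).card : ℝ)) = (k:ℝ) := by linarith
      exact_mod_cast this
    · rintro ⟨q, hq, hp⟩
      rw [hF, Finset.mem_filter, Finset.mem_product] at hq
      obtain ⟨⟨h1, h2⟩, h3⟩ := hq
      have hx : p.1 ∈ dyadicI N q.1 := hp.1
      have hy : p.2 ∈ dyadicI N q.2 := hp.2
      refine ⟨dyadicI_subset (Finset.mem_range.1 h1) hx,
        dyadicI_subset (Finset.mem_range.1 h2) hy, ?_⟩
      rw [sum_rad_eq hx hy, h3]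
  rw [hset]
  rw [measure_biUnion_finset]
  rotate_left
  · intro q hq q' hq' hne
    have hcase : q.1 ≠ q'.1 ∨ q.2 ≠ q'.2 := by
      by_contra h
      push_neg at h
      exact hne (Prod.ext h.1 h.2)
    simp only [Function.onFun]
    rw [Set.disjoint_left]
    rintro ⟨x, y⟩ h1 h2
    rcases hcase with h | h
    · exact Set.disjoint_left.1 (dyadicI_disjoint h) h1.1 h2.1
    · exact Set.disjoint_left.1 (dyadicI_disjoint h) h1.2 h2.2
  · intro q _
    exact (measurableSet_Ico).prod (measurableSet_Ico)
  have hvol : ∀ q : ℕ × ℕ, volume (dyadicI N q.1 ×ˢ dyadicI N q.2)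
      = ENNReal.ofReal ((2:ℝ)^(-(N:ℤ))) * ENNReal.ofReal ((2:ℝ)^(-(N:ℤ))) := by
    intro q
    rw [MeasureTheory.Measure.volume_eq_prod, MeasureTheory.Measure.prod_prod,
      volume_dyadicI, volume_dyadicI]
  rw [Finset.sum_congr rfl (fun q _ => hvol q), Finset.sum_const]
  have hc : F.card = 2^N * N.choose k := by rw [hF]; exact card_F n k
  rw [hc]
  have hr : (0:ℝ) ≤ (2:ℝ)^(-(N:ℤ)) := by positivity
  rw [← ENNReal.ofReal_mul hr, nsmul_eq_mul, ← ENNReal.ofReal_natCast,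
    ← ENNReal.ofReal_mul (by positivity)]
  congr 1
  rw [two_zpow_neg]
  push_cast
  have h2 : (0:ℝ) < 2^N := by positivity
  field_simp
end
end

section
/- Let n ≥ 0 and fix signs ε_R ∈ {-1,1} for all dyadic rectangles R of area 2^{-n} in [0,1)². Let R₁ be a dyadic rectangle in layer L_k and let G(x,y) = ∑_{R ∈ L_m, m > k} ε_R h_R(x,y). Then for every integer v, the measure of {p ∈ R₁ : h_{R₁}(p) + G(p) = v} equals the measure of {p ∈ R₁ : -h_{R₁}(p) + G(p) = v}. -/
open MeasureTheory Finset

noncomputable section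

lemma measurable_haarI (k m : ℕ) : Measurable (haarI k m) := by
  unfold haarI
  exact (measurable_const.ite measurableSet_Ico
    (measurable_const.ite measurableSet_Ico measurable_const))

lemma key_mul (J : ℕ) (r : ℝ) : (2:ℝ)^(J+1) * (r * (2:ℝ)^(-(J:ℤ))) = 2 * r := by
  have h : (2:ℝ)^(J+1) * (2:ℝ)^(-(J:ℤ)) = 2 := by
    rw [← zpow_natCast (2:ℝ) (J+1), ← zpow_add₀ (by norm_num : (2:ℝ) ≠ 0)]
    norm_num
  calc (2:ℝ)^(J+1) * (r * (2:ℝ)^(-(J:ℤ))) = ((2:ℝ)^(J+1) * (2:ℝ)^(-(J:ℤ))) * r := by ring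
  _ = 2 * r := by rw [h]

lemma haarI_floor (J m' : ℕ) (y : ℝ) :
    haarI J m' y =
      if ⌊(2:ℝ)^(J+1) * y⌋ = 2*(m':ℤ) then -1
      else if ⌊(2:ℝ)^(J+1) * y⌋ = 2*(m':ℤ)+1 then 1 else 0 := by
  have hP : (0:ℝ) < 2^(J+1) := by positivity
  have h1 : y ∈ Set.Ico ((m' : ℝ) * (2:ℝ)^(-(J:ℤ))) (((m' : ℝ) + 1/2) * (2:ℝ)^(-(J:ℤ)))
      ↔ ⌊(2:ℝ)^(J+1) * y⌋ = 2*(m':ℤ) := by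
    rw [Int.floor_eq_iff, Set.mem_Ico]
    constructor
    · rintro ⟨ha, hb⟩
      constructor
      · have := mul_le_mul_of_nonneg_left ha hP.le
        rw [key_mul] at this; push_cast; linarith
      · have := mul_lt_mul_of_pos_left hb hP
        rw [key_mul] at this; push_cast; linarith
    · rintro ⟨ha, hb⟩
      push_cast at ha hb
      constructor
      · have h2 : (2:ℝ)^(J+1) * ((m':ℝ) * (2:ℝ)^(-(J:ℤ))) ≤ (2:ℝ)^(J+1) * y := by
          rw [key_mul]; linarith
        exact le_of_mul_le_mul_left h2 hP
      · have h2 : (2:ℝ)^(J+1) * y < (2:ℝ)^(J+1) * (((m':ℝ)+1/2) * (2:ℝ)^(-(J:ℤ))) := by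
          rw [key_mul]; linarith
        exact lt_of_mul_lt_mul_left h2 hP.le
  have h2 : y ∈ Set.Ico (((m' : ℝ) + 1/2) * (2:ℝ)^(-(J:ℤ))) (((m' : ℝ) + 1) * (2:ℝ)^(-(J:ℤ)))
      ↔ ⌊(2:ℝ)^(J+1) * y⌋ = 2*(m':ℤ)+1 := by
    rw [Int.floor_eq_iff, Set.mem_Ico]
    constructor
    · rintro ⟨ha, hb⟩
      constructor
      · have := mul_le_mul_of_nonneg_left ha hP.le
        rw [key_mul] at this; push_cast; linarith
      · have := mul_lt_mul_of_pos_left hb hP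
        rw [key_mul] at this; push_cast; linarith
    · rintro ⟨ha, hb⟩
      push_cast at ha hb
      constructor
      · have h3 : (2:ℝ)^(J+1) * (((m':ℝ)+1/2) * (2:ℝ)^(-(J:ℤ))) ≤ (2:ℝ)^(J+1) * y := by
          rw [key_mul]; linarith
        exact le_of_mul_le_mul_left h3 hP
      · have h3 : (2:ℝ)^(J+1) * y < (2:ℝ)^(J+1) * (((m':ℝ)+1) * (2:ℝ)^(-(J:ℤ))) := by
          rw [key_mul]; linarith
        exact lt_of_mul_lt_mul_left h3 hP.le
  unfold haarI
  simp only [h1, h2]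

lemma floor_const_on_dyadic (L M J : ℕ) (hJ : J + 1 ≤ L) {y : ℝ} (hy : y ∈ dyadicI L M) :
    ⌊(2:ℝ)^(J+1) * y⌋ = (M / 2^(L-J-1) : ℕ) := by
  obtain ⟨ha, hb⟩ := hy
  set d := L - J - 1 with hd
  set q := M / 2^d with hq
  have hpow : (2:ℝ)^(J+1) * (2:ℝ)^(-(L:ℤ)) = ((2:ℝ)^d)⁻¹ := by
    rw [← zpow_natCast (2:ℝ) (J+1), ← zpow_add₀ (by norm_num : (2:ℝ) ≠ 0),
      ← zpow_natCast (2:ℝ) d, ← zpow_neg]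
    congr 1
    omega
  have h2d : (0:ℝ) < 2^d := by positivity
  have hql : q * 2^d ≤ M := Nat.div_mul_le_self M (2^d)
  have hqu : M < (q+1) * 2^d := by
    have h := Nat.div_add_mod M (2^d)
    have h2 : M % 2^d < 2^d := Nat.mod_lt _ (by positivity)
    calc M = 2^d * q + M % 2^d := by rw [hq, h]
    _ < 2^d * q + 2^d := by omega
    _ = (q+1) * 2^d := by ring
  rw [Int.floor_eq_iff]
  constructor
  · have hle : ((q:ℝ)) ≤ (M:ℝ) * ((2:ℝ)^d)⁻¹ := by
      have hc : (q:ℝ) * 2^d ≤ (M:ℝ) := by exact_mod_cast hql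
      have h2 := mul_le_mul_of_nonneg_right hc (inv_nonneg.mpr h2d.le)
      calc (q:ℝ) = (q:ℝ) * 2^d * ((2:ℝ)^d)⁻¹ := by field_simp
      _ ≤ (M:ℝ) * ((2:ℝ)^d)⁻¹ := h2
    calc ((q:ℤ):ℝ) = (q:ℝ) := by push_cast; ring
    _ ≤ (M:ℝ) * ((2:ℝ)^d)⁻¹ := hle
    _ = (2:ℝ)^(J+1) * ((M:ℝ) * (2:ℝ)^(-(L:ℤ))) := by
        rw [show (2:ℝ)^(J+1) * ((M:ℝ) * (2:ℝ)^(-(L:ℤ)))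
          = (M:ℝ) * ((2:ℝ)^(J+1) * (2:ℝ)^(-(L:ℤ))) from by ring, hpow]
    _ ≤ (2:ℝ)^(J+1) * y := mul_le_mul_of_nonneg_left ha (by positivity)
  · have hy2 : (2:ℝ)^(J+1) * y < ((M:ℝ)+1) * ((2:ℝ)^d)⁻¹ := by
      calc (2:ℝ)^(J+1) * y < (2:ℝ)^(J+1) * (((M:ℝ)+1) * (2:ℝ)^(-(L:ℤ))) :=
        mul_lt_mul_of_pos_left hb (by positivity)
      _ = ((M:ℝ)+1) * ((2:ℝ)^(J+1) * (2:ℝ)^(-(L:ℤ))) := by ring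
      _ = ((M:ℝ)+1) * ((2:ℝ)^d)⁻¹ := by rw [hpow]
    have hle : ((M:ℝ)+1) * ((2:ℝ)^d)⁻¹ ≤ (q:ℝ) + 1 := by
      rw [← div_eq_mul_inv, div_le_iff₀ h2d]
      calc ((M:ℝ)+1) = ((M+1 : ℕ):ℝ) := by push_cast; ring
      _ ≤ (((q+1) * 2^d : ℕ):ℝ) := by exact_mod_cast hqu
      _ = ((q:ℝ)+1) * 2^d := by push_cast; ring
    push_cast
    linarith

lemma haarI_const_on (L M J m' : ℕ) (hJ : J + 1 ≤ L) {y y' : ℝ}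
    (hy : y ∈ dyadicI L M) (hy' : y' ∈ dyadicI L M) :
    haarI J m' y = haarI J m' y' := by
  rw [haarI_floor, haarI_floor, floor_const_on_dyadic L M J hJ hy,
    floor_const_on_dyadic L M J hJ hy']

lemma G_const (n k m0' : ℕ) (ε : ℕ → ℕ → ℕ → ℝ) (x : ℝ) {y y' : ℝ}
    (hy : y ∈ dyadicI (n-k) m0') (hy' : y' ∈ dyadicI (n-k) m0') :
    (∑ j ∈ Finset.Ico (k+1) (n+1), ∑ m ∈ Finset.range (2^j),
      ∑ m' ∈ Finset.range (2^(n-j)), ε j m m' * haarR j m (n-j) m' (x, y))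
    = (∑ j ∈ Finset.Ico (k+1) (n+1), ∑ m ∈ Finset.range (2^j),
      ∑ m' ∈ Finset.range (2^(n-j)), ε j m m' * haarR j m (n-j) m' (x, y')) := by
  refine Finset.sum_congr rfl (fun j hj => ?_)
  rw [Finset.mem_Ico] at hj
  refine Finset.sum_congr rfl (fun m _ => ?_)
  refine Finset.sum_congr rfl (fun m' _ => ?_)
  unfold haarR
  simp only
  rw [haarI_const_on (n-k) m0' (n-j) m' (by omega) hy hy']

/-- Flipping the sign of a rectangle `R₁` of layer `L_k` does not change the distribution, on
`R₁`, of the sum over the higher layers. -/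
theorem flip_sign_level_sets (n k m0 m0' : ℕ) (hk : k ≤ n)
    (hm0 : m0 < 2^k) (hm0' : m0' < 2^(n-k))
    (ε : ℕ → ℕ → ℕ → ℝ) (hε : ∀ j m m', ε j m m' = 1 ∨ ε j m m' = -1) (v : ℤ) :
    volume {p : ℝ × ℝ | p ∈ (dyadicI k m0) ×ˢ (dyadicI (n-k) m0') ∧
        haarR k m0 (n-k) m0' p +
          (∑ j ∈ Finset.Ico (k+1) (n+1), ∑ m ∈ Finset.range (2^j),
            ∑ m' ∈ Finset.range (2^(n-j)), ε j m m' * haarR j m (n-j) m' p) = (v : ℝ)}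
    = volume {p : ℝ × ℝ | p ∈ (dyadicI k m0) ×ˢ (dyadicI (n-k) m0') ∧
        - haarR k m0 (n-k) m0' p +
          (∑ j ∈ Finset.Ico (k+1) (n+1), ∑ m ∈ Finset.range (2^j),
            ∑ m' ∈ Finset.range (2^(n-j)), ε j m m' * haarR j m (n-j) m' p) = (v : ℝ)} := by
  -- notation
  set G : ℝ × ℝ → ℝ := fun p => ∑ j ∈ Finset.Ico (k+1) (n+1), ∑ m ∈ Finset.range (2^j),
      ∑ m' ∈ Finset.range (2^(n-j)), ε j m m' * haarR j m (n-j) m' p with hGdef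
  have hGmeas : Measurable G := by
    apply Finset.measurable_sum
    intro j _
    apply Finset.measurable_sum
    intro m _
    apply Finset.measurable_sum
    intro m' _
    apply Measurable.const_mul
    exact ((measurable_haarI _ _).comp measurable_fst).mul
      ((measurable_haarI _ _).comp measurable_snd)
  have hhmeas : Measurable (haarR k m0 (n-k) m0') :=
    ((measurable_haarI _ _).comp measurable_fst).mul
      ((measurable_haarI _ _).comp measurable_snd)
  have hAB : MeasurableSet ((dyadicI k m0) ×ˢ (dyadicI (n-k) m0')) :=
    measurableSet_Ico.prod measurableSet_Ico
  have hS₁ : MeasurableSet {p : ℝ × ℝ | p ∈ (dyadicI k m0) ×ˢ (dyadicI (n-k) m0') ∧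
      haarR k m0 (n-k) m0' p + G p = (v : ℝ)} := by
    exact hAB.inter (measurableSet_eq_fun (hhmeas.add hGmeas) measurable_const)
  have hS₂ : MeasurableSet {p : ℝ × ℝ | p ∈ (dyadicI k m0) ×ˢ (dyadicI (n-k) m0') ∧
      - haarR k m0 (n-k) m0' p + G p = (v : ℝ)} := by
    exact hAB.inter (measurableSet_eq_fun (hhmeas.neg.add hGmeas) measurable_const)
  rw [show (volume : Measure (ℝ × ℝ)) = (volume : Measure ℝ).prod volume from
    Measure.volume_eq_prod ℝ ℝ, Measure.prod_apply hS₁, Measure.prod_apply hS₂]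
  refine lintegral_congr (fun x => ?_)
  -- per-fiber computation
  set N := n - k with hN
  set s : ℝ := (2:ℝ)^(-(N:ℤ)) with hs
  have hspos : (0:ℝ) < s := by positivity
  set Bl : Set ℝ := Set.Ico ((m0':ℝ) * s) (((m0':ℝ) + 1/2) * s) with hBl
  set Br : Set ℝ := Set.Ico (((m0':ℝ) + 1/2) * s) (((m0':ℝ) + 1) * s) with hBr
  by_cases hx : x ∈ dyadicI k m0
  · -- the interesting case
    have hyB : (m0':ℝ) * s ∈ dyadicI N m0' := by
      constructor
      · exact le_refl _
      · have : (m0':ℝ) * s < ((m0':ℝ) + 1) * s := by nlinarith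
        exact this
    set c : ℝ := haarI k m0 x with hc
    set g : ℝ := G (x, (m0':ℝ) * s) with hg
    have hGy : ∀ {y : ℝ}, y ∈ dyadicI N m0' → G (x, y) = g :=
      fun hy => G_const n k m0' ε x hy hyB
    have hBlB : Bl ⊆ dyadicI N m0' := by
      intro y hy
      exact ⟨hy.1, lt_of_lt_of_le hy.2 (by nlinarith)⟩
    have hBrB : Br ⊆ dyadicI N m0' := by
      intro y hy
      exact ⟨le_trans (by nlinarith) hy.1, hy.2⟩
    have hhl : ∀ {y : ℝ}, y ∈ Bl → haarI N m0' y = -1 := by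
      intro y hy
      unfold haarI
      rw [if_pos hy]
    have hhr : ∀ {y : ℝ}, y ∈ Br → haarI N m0' y = 1 := by
      intro y hy
      unfold haarI
      rw [if_neg, if_pos hy]
      intro hcon
      exact absurd hy.1 (not_le.mpr hcon.2)
    have hsplit : ∀ {y : ℝ}, y ∈ dyadicI N m0' → y ∈ Bl ∨ y ∈ Br := by
      intro y hy
      by_cases hl : y < ((m0':ℝ) + 1/2) * s
      · exact Or.inl ⟨hy.1, hl⟩
      · exact Or.inr ⟨not_lt.mp hl, hy.2⟩
    have e₁ : (fun y => (x, y)) ⁻¹' {p : ℝ × ℝ | p ∈ (dyadicI k m0) ×ˢ (dyadicI N m0') ∧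
        haarR k m0 N m0' p + G p = (v : ℝ)}
        = (if -c + g = (v:ℝ) then Bl else ∅) ∪ (if c + g = (v:ℝ) then Br else ∅) := by
      ext y
      simp only [Set.mem_preimage, Set.mem_setOf_eq, Set.mem_prod, Set.mem_union]
      constructor
      · rintro ⟨⟨hx', hyB'⟩, heq⟩
        have hG' : G (x, y) = g := hGy hyB'
        rcases hsplit hyB' with hl | hr
        · left
          have : haarR k m0 N m0' (x, y) = -c := by
            unfold haarR; simp only; rw [hhl hl]; ring
          rw [this, hG'] at heq
          rw [if_pos heq]
          exact hl
        · right
          have : haarR k m0 N m0' (x, y) = c := by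
            unfold haarR; simp only; rw [hhr hr]; ring
          rw [this, hG'] at heq
          rw [if_pos heq]
          exact hr
      · rintro (hy | hy)
        · split_ifs at hy with hcond
          · have hyB' := hBlB hy
            refine ⟨⟨hx, hyB'⟩, ?_⟩
            have : haarR k m0 N m0' (x, y) = -c := by
              unfold haarR; simp only; rw [hhl hy]; ring
            rw [this, hGy hyB']
            exact hcond
          · exact absurd hy (Set.notMem_empty y)
        · split_ifs at hy with hcond
          · have hyB' := hBrB hy
            refine ⟨⟨hx, hyB'⟩, ?_⟩
            have : haarR k m0 N m0' (x, y) = c := by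
              unfold haarR; simp only; rw [hhr hy]; ring
            rw [this, hGy hyB']
            exact hcond
          · exact absurd hy (Set.notMem_empty y)
    have e₂ : (fun y => (x, y)) ⁻¹' {p : ℝ × ℝ | p ∈ (dyadicI k m0) ×ˢ (dyadicI N m0') ∧
        - haarR k m0 N m0' p + G p = (v : ℝ)}
        = (if c + g = (v:ℝ) then Bl else ∅) ∪ (if -c + g = (v:ℝ) then Br else ∅) := by
      ext y
      simp only [Set.mem_preimage, Set.mem_setOf_eq, Set.mem_prod, Set.mem_union]
      constructor
      · rintro ⟨⟨hx', hyB'⟩, heq⟩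
        have hG' : G (x, y) = g := hGy hyB'
        rcases hsplit hyB' with hl | hr
        · left
          have : - haarR k m0 N m0' (x, y) = c := by
            unfold haarR; simp only; rw [hhl hl]; ring
          rw [this, hG'] at heq
          rw [if_pos heq]
          exact hl
        · right
          have : - haarR k m0 N m0' (x, y) = -c := by
            unfold haarR; simp only; rw [hhr hr]; ring
          rw [this, hG'] at heq
          rw [if_pos heq]
          exact hr
      · rintro (hy | hy)
        · split_ifs at hy with hcond
          · have hyB' := hBlB hy
            refine ⟨⟨hx, hyB'⟩, ?_⟩
            have : - haarR k m0 N m0' (x, y) = c := by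
              unfold haarR; simp only; rw [hhl hy]; ring
            rw [this, hGy hyB']
            exact hcond
          · exact absurd hy (Set.notMem_empty y)
        · split_ifs at hy with hcond
          · have hyB' := hBrB hy
            refine ⟨⟨hx, hyB'⟩, ?_⟩
            have : - haarR k m0 N m0' (x, y) = -c := by
              unfold haarR; simp only; rw [hhr hy]; ring
            rw [this, hGy hyB']
            exact hcond
          · exact absurd hy (Set.notMem_empty y)
    show volume _ = volume _
    rw [show (Prod.mk x : ℝ → ℝ × ℝ) = (fun y => (x, y)) from rfl]
    rw [e₁, e₂]
    have hvol : volume Bl = volume Br := by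
      rw [hBl, hBr, Real.volume_Ico, Real.volume_Ico]
      congr 1
      ring
    split_ifs with h1 h2 <;>
      simp [Set.union_empty, Set.empty_union, hvol]
  · -- x outside the horizontal interval: both fibers empty
    have e₁ : (Prod.mk x : ℝ → ℝ × ℝ) ⁻¹' {p : ℝ × ℝ | p ∈ (dyadicI k m0) ×ˢ (dyadicI N m0') ∧
        haarR k m0 N m0' p + G p = (v : ℝ)} = ∅ := by
      ext y
      simp only [Set.mem_preimage, Set.mem_setOf_eq, Set.mem_prod, Set.mem_empty_iff_false,
        iff_false]
      rintro ⟨⟨hx', _⟩, _⟩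
      exact hx hx'
    have e₂ : (Prod.mk x : ℝ → ℝ × ℝ) ⁻¹' {p : ℝ × ℝ | p ∈ (dyadicI k m0) ×ˢ (dyadicI N m0') ∧
        - haarR k m0 N m0' p + G p = (v : ℝ)} = ∅ := by
      ext y
      simp only [Set.mem_preimage, Set.mem_setOf_eq, Set.mem_prod, Set.mem_empty_iff_false,
        iff_false]
      rintro ⟨⟨hx', _⟩, _⟩
      exact hx hx'
    rw [e₁, e₂]
end
end

section
/- For any n ≥ 0 and any signs ε_R ∈ {-1,1}, the set of points where ∑_{|R|=2^{-n}} ε_R h_R attains the value n+1 is a union of exactly 2^{n+1} dyadic squares of side length 2^{-n-1}. -/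
open MeasureTheory Finset

noncomputable section

/-- the sign `±1` given by binary digit `i` of `c` (counted from `2^i` place). -/
def sgn (c i : ℕ) : ℝ := if (c / 2^i) % 2 = 1 then 1 else -1

lemma sgn_pm (c i : ℕ) : sgn c i = 1 ∨ sgn c i = -1 := by
  unfold sgn; split <;> simp

lemma mem_Ico_dyadic (N a u v : ℕ) (x : ℝ) (hx : x ∈ dyadicI N a) :
    x ∈ Set.Ico ((u:ℝ) * (2:ℝ)^(-(N:ℤ))) ((v:ℝ) * (2:ℝ)^(-(N:ℤ))) ↔ (u ≤ a ∧ a < v) := by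
  obtain ⟨h1, h2⟩ := hx
  have hd : (0:ℝ) < (2:ℝ)^(-(N:ℤ)) := by positivity
  constructor
  · rintro ⟨g1, g2⟩
    constructor
    · have : (u:ℝ) * (2:ℝ)^(-(N:ℤ)) < ((a:ℝ)+1) * (2:ℝ)^(-(N:ℤ)) := lt_of_le_of_lt g1 h2
      have : (u:ℝ) < (a:ℝ) + 1 := lt_of_mul_lt_mul_right this hd.le
      exact_mod_cast Nat.lt_add_one_iff.mp (by exact_mod_cast this)
    · have : (a:ℝ) * (2:ℝ)^(-(N:ℤ)) < (v:ℝ) * (2:ℝ)^(-(N:ℤ)) := lt_of_le_of_lt h1 g2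
      have : (a:ℝ) < (v:ℝ) := lt_of_mul_lt_mul_right this hd.le
      exact_mod_cast this
  · rintro ⟨g1, g2⟩
    constructor
    · calc (u:ℝ) * (2:ℝ)^(-(N:ℤ)) ≤ (a:ℝ) * (2:ℝ)^(-(N:ℤ)) := by
            apply mul_le_mul_of_nonneg_right (by exact_mod_cast g1) hd.le
        _ ≤ x := h1
    · calc x < ((a:ℝ)+1) * (2:ℝ)^(-(N:ℤ)) := h2
        _ ≤ (v:ℝ) * (2:ℝ)^(-(N:ℤ)) := by
            apply mul_le_mul_of_nonneg_right _ hd.le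
            have : a + 1 ≤ v := g2
            exact_mod_cast this

lemma pow_mul_zpow (s t : ℕ) (h : s ≤ t) :
    ((2:ℝ)^(t-s)) * (2:ℝ)^(-(t:ℤ)) = (2:ℝ)^(-(s:ℤ)) := by
  rw [← zpow_natCast (2:ℝ) (t-s), ← zpow_add₀ (by norm_num : (2:ℝ) ≠ 0)]
  congr 1
  push_cast [Nat.cast_sub h]
  ring

lemma half_zpow (k n : ℕ) (hk : k ≤ n) :
    (1/2:ℝ) * (2:ℝ)^(-(k:ℤ)) = ((2:ℝ)^(n-k)) * (2:ℝ)^(-((n+1:ℕ):ℤ)) := by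
  rw [show (1/2:ℝ) = (2:ℝ)^(-1:ℤ) by norm_num, ← zpow_natCast (2:ℝ) (n-k),
    ← zpow_add₀ (by norm_num : (2:ℝ) ≠ 0), ← zpow_add₀ (by norm_num : (2:ℝ) ≠ 0)]
  congr 1
  push_cast [Nat.cast_sub hk]
  ring

lemma haarI_eq (n k a m : ℕ) (hk : k ≤ n) (x : ℝ) (hx : x ∈ dyadicI (n+1) a) :
    haarI k m x = if m = a / 2^(n+1-k) then sgn a (n-k) else 0 := by
  have h1 : k ≤ n+1 := by omega
  have e0 : (2:ℝ)^(-(k:ℤ)) = ((2:ℝ)^(n+1-k)) * (2:ℝ)^(-((n+1:ℕ):ℤ)) :=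
    (pow_mul_zpow k (n+1) h1).symm
  have ehalf := half_zpow k n hk
  have c1 : ((m * 2^(n+1-k) : ℕ):ℝ) = (m:ℝ) * 2^(n+1-k) := by push_cast; ring
  have c2 : ((m * 2^(n+1-k) + 2^(n-k) : ℕ):ℝ) = (m:ℝ) * 2^(n+1-k) + 2^(n-k) := by
    push_cast; ring
  have c3 : (((m+1) * 2^(n+1-k) : ℕ):ℝ) = ((m:ℝ)+1) * 2^(n+1-k) := by push_cast; ring
  have e1 : (m:ℝ) * (2:ℝ)^(-(k:ℤ)) = ((m * 2^(n+1-k) : ℕ):ℝ) * (2:ℝ)^(-((n+1:ℕ):ℤ)) := by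
    rw [c1, e0]; ring
  have e2 : ((m:ℝ)+1/2) * (2:ℝ)^(-(k:ℤ))
      = ((m * 2^(n+1-k) + 2^(n-k) : ℕ):ℝ) * (2:ℝ)^(-((n+1:ℕ):ℤ)) := by
    rw [c2, add_mul, ehalf, e0]; ring
  have e3 : ((m:ℝ)+1) * (2:ℝ)^(-(k:ℤ))
      = (((m+1) * 2^(n+1-k) : ℕ):ℝ) * (2:ℝ)^(-((n+1:ℕ):ℤ)) := by
    rw [c3, e0]; ring
  unfold haarI
  rw [e1, e2, e3]
  simp only [mem_Ico_dyadic (n+1) a _ _ x hx]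
  -- now a pure ℕ statement
  unfold sgn
  have hsplit : 2^(n+1-k) = 2 * 2^(n-k) := by
    rw [show n+1-k = (n-k)+1 by omega, pow_succ]; ring
  set D := 2^(n-k) with hD
  have hDpos : 0 < D := Nat.pow_pos (by norm_num)
  rw [hsplit]
  by_cases hC1 : m * (2*D) ≤ a ∧ a < m * (2*D) + D
  · have hq : a / (2*D) = m := Nat.div_eq_of_lt_le hC1.1
      (lt_of_lt_of_le hC1.2 (by nlinarith [hC1.1]))
    have hdiv : a / D = 2*m := Nat.div_eq_of_lt_le (by nlinarith [hC1.1]) (by nlinarith [hC1.2])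
    rw [if_pos hC1, if_pos hq.symm, hdiv]
    simp [Nat.mul_mod_right]
  · by_cases hC2 : m * (2*D) + D ≤ a ∧ a < (m+1) * (2*D)
    · have hq : a / (2*D) = m := Nat.div_eq_of_lt_le (le_trans (by nlinarith) hC2.1) hC2.2
      have hdiv : a / D = 2*m+1 := Nat.div_eq_of_lt_le (by nlinarith [hC2.1]) (by nlinarith [hC2.2])
      rw [if_neg hC1, if_pos hC2, if_pos hq.symm, hdiv]
      have : (2*m+1) % 2 = 1 := by omega
      rw [this]
      simp
    · rw [if_neg hC1, if_neg hC2, if_neg]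
      intro hm
      have hlo : a / (2*D) * (2*D) ≤ a := Nat.div_mul_le_self a (2*D)
      have hhi : a < (a/(2*D) + 1) * (2*D) := by
        have h := Nat.div_add_mod a (2*D)
        have h2 : a % (2*D) < 2*D := Nat.mod_lt _ (by omega)
        nlinarith
      rw [← hm] at hlo hhi
      push_neg at hC1 hC2
      rcases lt_or_ge a (m*(2*D) + D) with h | h
      · exact absurd (hC1 hlo) (not_le.mpr h)
      · exact absurd (hC2 h) (not_le.mpr hhi)

/-- The value of the layer-`k` term of the signed sum on the dyadic square `(a,b)`. -/
def tau (n : ℕ) (ε : ℕ → ℕ → ℕ → ℝ) (a b k : ℕ) : ℝ :=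
  ε k (a / 2^(n+1-k)) (b / 2^(k+1)) * sgn a (n-k) * sgn b k

lemma tau_pm (n : ℕ) (ε : ℕ → ℕ → ℕ → ℝ) (hε : ∀ j m m', ε j m m' = 1 ∨ ε j m m' = -1)
    (a b k : ℕ) : tau n ε a b k = 1 ∨ tau n ε a b k = -1 := by
  unfold tau
  rcases hε k (a / 2^(n+1-k)) (b / 2^(k+1)) with h | h <;>
    rcases sgn_pm a (n-k) with h2 | h2 <;> rcases sgn_pm b k with h3 | h3 <;>
      rw [h, h2, h3] <;> norm_num

lemma signedSum_eq (n : ℕ) (ε : ℕ → ℕ → ℕ → ℝ) (a b : ℕ) (ha : a < 2^(n+1)) (hb : b < 2^(n+1))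
    (p : ℝ × ℝ) (hp1 : p.1 ∈ dyadicI (n+1) a) (hp2 : p.2 ∈ dyadicI (n+1) b) :
    signedSum n ε p = ∑ k ∈ Finset.range (n+1), tau n ε a b k := by
  unfold signedSum
  apply Finset.sum_congr rfl
  intro k hk
  have hkn : k ≤ n := by simpa [Nat.lt_succ_iff] using hk
  have hx : ∀ m, haarI k m p.1 = if m = a / 2^(n+1-k) then sgn a (n-k) else 0 :=
    fun m => haarI_eq n k a m hkn p.1 hp1
  have hy : ∀ m', haarI (n-k) m' p.2 = if m' = b / 2^(k+1) then sgn b k else 0 := by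
    intro m'
    have := haarI_eq n (n-k) b m' (by omega) p.2 hp2
    rwa [show n+1-(n-k) = k+1 by omega, show n-(n-k) = k by omega] at this
  have hqa : a / 2^(n+1-k) ∈ Finset.range (2^k) := by
    rw [Finset.mem_range]
    apply Nat.div_lt_of_lt_mul
    calc a < 2^(n+1) := ha
      _ = 2^(n+1-k) * 2^k := by rw [← pow_add]; congr 1; omega
  have hqb : b / 2^(k+1) ∈ Finset.range (2^(n-k)) := by
    rw [Finset.mem_range]
    apply Nat.div_lt_of_lt_mul
    calc b < 2^(n+1) := hb
      _ = 2^(k+1) * 2^(n-k) := by rw [← pow_add]; congr 1; omega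
  rw [Finset.sum_eq_single (a / 2^(n+1-k))]
  · rw [Finset.sum_eq_single (b / 2^(k+1))]
    · unfold haarR tau
      rw [hx, hy, if_pos rfl, if_pos rfl]; ring
    · intro m' _ hm'
      unfold haarR
      rw [hy, if_neg hm']; ring
    · intro h; exact absurd hqb h
  · intro m _ hm
    apply Finset.sum_eq_zero
    intro m' _
    unfold haarR
    rw [hx, if_neg hm]; ring
  · intro h; exact absurd hqa h

/-- Top-down construction of the matching vertical index: `bseq n ε a j` consists of the top
`j` binary digits of the unique `b` matching `a`. -/
def bseq (n : ℕ) (ε : ℕ → ℕ → ℕ → ℝ) (a : ℕ) : ℕ → ℕ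
  | 0 => 0
  | j+1 => 2 * bseq n ε a j +
      (if ε (n-j) (a / 2^(j+1)) (bseq n ε a j) * sgn a j = 1 then 1 else 0)

lemma bseq_lt (n : ℕ) (ε : ℕ → ℕ → ℕ → ℝ) (a : ℕ) : ∀ j, bseq n ε a j < 2^j := by
  intro j
  induction j with
  | zero => simp [bseq]
  | succ j ih =>
    have : 2^(j+1) = 2*2^j := by rw [pow_succ]; ring
    rw [bseq, this]
    split <;> omega

lemma bseq_div (n : ℕ) (ε : ℕ → ℕ → ℕ → ℝ) (a : ℕ) :
    ∀ i j, j ≤ i → bseq n ε a i / 2^(i-j) = bseq n ε a j := by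
  intro i
  induction i with
  | zero => intro j hj; interval_cases j; simp
  | succ i ih =>
    intro j hj
    rcases Nat.eq_or_lt_of_le hj with h | h
    · subst h; simp
    · have hj' : j ≤ i := by omega
      have : i + 1 - j = (i - j) + 1 := by omega
      rw [this, pow_succ, mul_comm, ← Nat.div_div_eq_div_mul]
      have h2 : bseq n ε a (i+1) / 2 = bseq n ε a i := by
        rw [bseq]; split <;> omega
      rw [h2, ih j hj']

lemma pm_mul_eq_one {E s : ℝ} (hE : E = 1 ∨ E = -1) (hs : s = 1 ∨ s = -1)
    (h : E * s = 1) : (E = 1 ∧ s = 1) ∨ (E = -1 ∧ s = -1) := by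
  rcases hE with h1 | h1 <;> rcases hs with h2 | h2
  · exact Or.inl ⟨h1, h2⟩
  · rw [h1, h2] at h; norm_num at h
  · rw [h1, h2] at h; norm_num at h
  · exact Or.inr ⟨h1, h2⟩

lemma tau_bseq (n : ℕ) (ε : ℕ → ℕ → ℕ → ℝ) (hε : ∀ j m m', ε j m m' = 1 ∨ ε j m m' = -1)
    (a k : ℕ) (hk : k ≤ n) : tau n ε a (bseq n ε a (n+1)) k = 1 := by
  have h1 : bseq n ε a (n+1) / 2^(k+1) = bseq n ε a (n-k) := by
    have := bseq_div n ε a (n+1) (n-k) (by omega)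
    rwa [show n+1-(n-k) = k+1 by omega] at this
  have h2 : bseq n ε a (n+1) / 2^k = bseq n ε a ((n-k)+1) := by
    have := bseq_div n ε a (n+1) ((n-k)+1) (by omega)
    rwa [show n+1-((n-k)+1) = k by omega] at this
  have hbj : bseq n ε a ((n-k)+1)
      = 2 * bseq n ε a (n-k) +
        (if ε k (a / 2^((n-k)+1)) (bseq n ε a (n-k)) * sgn a (n-k) = 1 then 1 else 0) := by
    simp only [bseq]
    rw [show n-(n-k) = k by omega]
  unfold tau
  rw [show n+1-k = (n-k)+1 by omega, h1]
  have hEpm : ε k (a / 2^((n-k)+1)) (bseq n ε a (n-k)) * sgn a (n-k) = 1 ∨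
      ε k (a / 2^((n-k)+1)) (bseq n ε a (n-k)) * sgn a (n-k) = -1 := by
    rcases hε k (a / 2^((n-k)+1)) (bseq n ε a (n-k)) with h | h <;>
      rcases sgn_pm a (n-k) with h' | h' <;> rw [h, h'] <;> norm_num
  have hmod : bseq n ε a (n+1) / 2^k % 2
      = (if ε k (a / 2^((n-k)+1)) (bseq n ε a (n-k)) * sgn a (n-k) = 1 then 1 else 0) := by
    rw [h2, hbj]; split <;> omega
  rcases hEpm with h | h
  · have hs : sgn (bseq n ε a (n+1)) k = 1 := by
      unfold sgn; rw [hmod]; norm_num [h]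
    rw [hs, h]; norm_num
  · have hs : sgn (bseq n ε a (n+1)) k = -1 := by
      unfold sgn; rw [hmod]; norm_num [h]
    rw [hs, h]; norm_num

lemma eq_bseq (n : ℕ) (ε : ℕ → ℕ → ℕ → ℝ) (hε : ∀ j m m', ε j m m' = 1 ∨ ε j m m' = -1)
    (a b : ℕ) (hb : b < 2^(n+1)) (hτ : ∀ k, k ≤ n → tau n ε a b k = 1) :
    b = bseq n ε a (n+1) := by
  have main : ∀ j, j ≤ n+1 → b / 2^(n+1-j) = bseq n ε a j := by
    intro j
    induction j with
    | zero => intro _; simp [bseq, Nat.div_eq_of_lt hb]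
    | succ j ih =>
      intro hj
      have IH := ih (by omega)
      have ht := hτ (n-j) (by omega)
      unfold tau at ht
      rw [show n+1-(n-j) = j+1 by omega, show n-(n-j) = j by omega,
          show (n-j)+1 = n+1-j by omega, IH] at ht
      have hEpm : ε (n-j) (a / 2^(j+1)) (bseq n ε a j) * sgn a j = 1 ∨
          ε (n-j) (a / 2^(j+1)) (bseq n ε a j) * sgn a j = -1 := by
        rcases hε (n-j) (a / 2^(j+1)) (bseq n ε a j) with h | h <;>
          rcases sgn_pm a j with h' | h' <;> rw [h, h'] <;> norm_num
      have hsplit : b / 2^(n-j) = 2 * (b / 2^(n+1-j)) + (b / 2^(n-j)) % 2 := by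
        have : b / 2^(n+1-j) = b / 2^(n-j) / 2 := by
          rw [Nat.div_div_eq_div_mul, ← pow_succ, show (n-j)+1 = n+1-j by omega]
        omega
      have hbit : (b / 2^(n-j)) % 2
          = (if ε (n-j) (a / 2^(j+1)) (bseq n ε a j) * sgn a j = 1 then 1 else 0) := by
        rcases pm_mul_eq_one hEpm (sgn_pm b (n-j)) ht with ⟨hE, hs⟩ | ⟨hE, hs⟩
        · rw [if_pos hE]
          unfold sgn at hs
          by_cases hm : (b / 2^(n-j)) % 2 = 1
          · exact hm
          · rw [if_neg hm] at hs; norm_num at hs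
        · rw [if_neg (by rw [hE]; norm_num)]
          unfold sgn at hs
          by_cases hm : (b / 2^(n-j)) % 2 = 1
          · rw [if_pos hm] at hs; norm_num at hs
          · omega
      rw [show n+1-(j+1) = n-j by omega, hsplit, IH, hbit]
      conv_rhs => rw [bseq]
  have := main (n+1) le_rfl
  simpa using this

lemma all_one_of_sum (s : Finset ℕ) (f : ℕ → ℝ) (h : ∀ i ∈ s, f i = 1 ∨ f i = -1)
    (hs : ∑ i ∈ s, f i = s.card) : ∀ i ∈ s, f i = 1 := by
  by_contra hc
  push_neg at hc
  obtain ⟨i, hi, hne⟩ := hc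
  have hfi : f i = -1 := (h i hi).resolve_left hne
  have hlt : ∑ j ∈ s, f j < ∑ j ∈ s, (1:ℝ) :=
    Finset.sum_lt_sum (fun j hj => by rcases h j hj with h' | h' <;> rw [h'] <;> norm_num)
      ⟨i, hi, by rw [hfi]; norm_num⟩
  rw [Finset.sum_const, nsmul_eq_mul, mul_one, hs] at hlt
  exact lt_irrefl _ hlt

lemma one_eq_pow_mul_zpow (N : ℕ) : ((2:ℝ)^N) * (2:ℝ)^(-(N:ℤ)) = 1 := by
  have := pow_mul_zpow 0 N (Nat.zero_le N)
  simpa using this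

lemma dyadic_floor (N : ℕ) (x : ℝ) (hx : x ∈ Set.Ico (0:ℝ) 1) :
    ∃ a : ℕ, a < 2^N ∧ x ∈ dyadicI N a := by
  have hd : (0:ℝ) < (2:ℝ)^(-(N:ℤ)) := by positivity
  have hnn : 0 ≤ x / (2:ℝ)^(-(N:ℤ)) := div_nonneg hx.1 hd.le
  refine ⟨⌊x / (2:ℝ)^(-(N:ℤ))⌋₊, ?_, ?_, ?_⟩
  · rw [Nat.floor_lt hnn]
    push_cast
    rw [div_lt_iff₀ hd]
    calc x < 1 := hx.2
      _ = 2^N * (2:ℝ)^(-(N:ℤ)) := (one_eq_pow_mul_zpow N).symm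
  · have h := Nat.floor_le hnn
    calc (⌊x / (2:ℝ)^(-(N:ℤ))⌋₊ : ℝ) * (2:ℝ)^(-(N:ℤ))
        ≤ (x / (2:ℝ)^(-(N:ℤ))) * (2:ℝ)^(-(N:ℤ)) := mul_le_mul_of_nonneg_right h hd.le
      _ = x := div_mul_cancel₀ x hd.ne'
  · have h := Nat.lt_floor_add_one (x / (2:ℝ)^(-(N:ℤ)))
    calc x = (x / (2:ℝ)^(-(N:ℤ))) * (2:ℝ)^(-(N:ℤ)) := (div_mul_cancel₀ x hd.ne').symm
      _ < ((⌊x / (2:ℝ)^(-(N:ℤ))⌋₊ : ℝ) + 1) * (2:ℝ)^(-(N:ℤ)) := mul_lt_mul_of_pos_right h hd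

lemma dyadic_sub (N a : ℕ) (ha : a < 2^N) (x : ℝ) (hx : x ∈ dyadicI N a) :
    x ∈ Set.Ico (0:ℝ) 1 := by
  obtain ⟨h1, h2⟩ := hx
  have hd : (0:ℝ) < (2:ℝ)^(-(N:ℤ)) := by positivity
  constructor
  · calc (0:ℝ) ≤ (a:ℝ) * (2:ℝ)^(-(N:ℤ)) := by positivity
      _ ≤ x := h1
  · calc x < ((a:ℝ)+1) * (2:ℝ)^(-(N:ℤ)) := h2
      _ ≤ ((2^N : ℕ):ℝ) * (2:ℝ)^(-(N:ℤ)) := by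
          apply mul_le_mul_of_nonneg_right _ hd.le
          have : (a:ℕ) + 1 ≤ 2^N := ha
          exact_mod_cast this
      _ = 1 := by push_cast; exact one_eq_pow_mul_zpow N

/-- The set where the signed small ball sum attains the value `n+1` is a union of exactly
`2^{n+1}` dyadic squares of side `2^{-n-1}`. -/
theorem max_level_set_union_squares (n : ℕ) (ε : ℕ → ℕ → ℕ → ℝ)
    (hε : ∀ j m m', ε j m m' = 1 ∨ ε j m m' = -1) :
    ∃ S : Finset (ℕ × ℕ), S.card = 2^(n+1) ∧
      (∀ q ∈ S, q.1 < 2^(n+1) ∧ q.2 < 2^(n+1)) ∧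
      {p : ℝ × ℝ | p.1 ∈ Set.Ico (0:ℝ) 1 ∧ p.2 ∈ Set.Ico (0:ℝ) 1 ∧
          signedSum n ε p = (n : ℝ) + 1}
        = ⋃ q ∈ S, (dyadicI (n+1) q.1) ×ˢ (dyadicI (n+1) q.2) := by
  classical
  refine ⟨(Finset.range (2^(n+1))).image (fun a => (a, bseq n ε a (n+1))), ?_, ?_, ?_⟩
  · rw [Finset.card_image_of_injective _ (fun a a' h => by
      simpa using congrArg Prod.fst h)]
    exact Finset.card_range _
  · intro q hq
    simp only [Finset.mem_image, Finset.mem_range] at hq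
    obtain ⟨a, ha, rfl⟩ := hq
    exact ⟨ha, bseq_lt n ε a (n+1)⟩
  · ext p
    simp only [Set.mem_setOf_eq, Set.mem_iUnion, Finset.mem_image, Finset.mem_range]
    constructor
    · rintro ⟨hx, hy, hsum⟩
      obtain ⟨a, ha, hxa⟩ := dyadic_floor (n+1) p.1 hx
      obtain ⟨b, hb, hyb⟩ := dyadic_floor (n+1) p.2 hy
      rw [signedSum_eq n ε a b ha hb p hxa hyb] at hsum
      have hall : ∀ k ∈ Finset.range (n+1), tau n ε a b k = 1 := by
        apply all_one_of_sum _ _ (fun k _ => tau_pm n ε hε a b k)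
        rw [hsum, Finset.card_range]; push_cast; ring
      have hbeq : b = bseq n ε a (n+1) :=
        eq_bseq n ε hε a b hb (fun k hk => hall k (Finset.mem_range.mpr (by omega)))
      exact ⟨(a, bseq n ε a (n+1)), ⟨a, ha, rfl⟩, ⟨hxa, hbeq ▸ hyb⟩⟩
    · rintro ⟨q, ⟨a, ha, rfl⟩, hpq⟩
      obtain ⟨hx, hy⟩ := hpq
      have hb := bseq_lt n ε a (n+1)
      refine ⟨dyadic_sub _ _ ha _ hx, dyadic_sub _ _ hb _ hy, ?_⟩
      rw [signedSum_eq n ε a _ ha hb p hx hy]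
      rw [Finset.sum_congr rfl (fun k hk => tau_bseq n ε hε a k
        (by simpa [Nat.lt_succ_iff] using Finset.mem_range.mp hk))]
      rw [Finset.sum_const, Finset.card_range, nsmul_eq_mul, mul_one]
      push_cast; ring
end
end

section
/- For any n ≥ 0 and any signs ε_R ∈ {-1,1}, the supremum of |∑_{|R|=2^{-n}} ε_R h_R| over [0,1)² is exactly n+1, and this value is attained on a set of positive measure. -/
open MeasureTheory Finset

noncomputable section

/-! ### Auxiliary lemmas -/

lemma two_zpow_pos' (k : ℤ) : (0:ℝ) < (2:ℝ)^k := by positivity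

lemma haarI_neg {k m : ℕ} {x : ℝ}
    (h1 : (m:ℝ) * (2:ℝ)^(-(k:ℤ)) ≤ x) (h2 : x < ((m:ℝ) + 1/2) * (2:ℝ)^(-(k:ℤ))) :
    haarI k m x = -1 := by
  unfold haarI; rw [if_pos ⟨h1, h2⟩]

lemma haarI_pos {k m : ℕ} {x : ℝ}
    (h1 : ((m:ℝ) + 1/2) * (2:ℝ)^(-(k:ℤ)) ≤ x) (h2 : x < ((m:ℝ) + 1) * (2:ℝ)^(-(k:ℤ))) :
    haarI k m x = 1 := by
  unfold haarI
  rw [if_neg, if_pos ⟨h1, h2⟩]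
  rintro ⟨-, h⟩; exact absurd h1 (not_le.2 h)

lemma abs_haarI_le (k m : ℕ) (x : ℝ) : |haarI k m x| ≤ 1 := by
  unfold haarI; split_ifs <;> norm_num

lemma mem_of_haarI_ne {k m : ℕ} {x : ℝ} (h : haarI k m x ≠ 0) :
    (m:ℝ) * (2:ℝ)^(-(k:ℤ)) ≤ x ∧ x < ((m:ℝ) + 1) * (2:ℝ)^(-(k:ℤ)) := by
  unfold haarI at h
  have hc := two_zpow_pos' (-(k:ℤ))
  split_ifs at h with h1 h2
  · exact ⟨h1.1, lt_of_lt_of_le h1.2 (by nlinarith)⟩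
  · exact ⟨le_trans (by nlinarith) h2.1, h2.2⟩
  · exact absurd rfl h

lemma floor_eq_of_mem {k m : ℕ} {x : ℝ}
    (h1 : (m:ℝ) * (2:ℝ)^(-(k:ℤ)) ≤ x) (h2 : x < ((m:ℝ) + 1) * (2:ℝ)^(-(k:ℤ))) :
    ⌊(2:ℝ)^k * x⌋ = (m:ℤ) := by
  have h2k : (0:ℝ) < (2:ℝ)^k := by positivity
  have hc : (2:ℝ)^(-(k:ℤ)) = ((2:ℝ)^k)⁻¹ := by
    rw [zpow_neg, zpow_natCast]
  rw [hc] at h1 h2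
  have hinv : ((2:ℝ)^k)⁻¹ * (2:ℝ)^k = 1 := inv_mul_cancel₀ (ne_of_gt h2k)
  rw [Int.floor_eq_iff]
  constructor
  · push_cast
    nlinarith [mul_le_mul_of_nonneg_right h1 h2k.le]
  · push_cast
    nlinarith [mul_lt_mul_of_pos_right h2 h2k]

lemma haarI_eq_zero {k m i : ℕ} {x : ℝ}
    (h1 : (m:ℝ) * (2:ℝ)^(-(k:ℤ)) ≤ x) (h2 : x < ((m:ℝ) + 1) * (2:ℝ)^(-(k:ℤ)))
    (hne : i ≠ m) : haarI k i x = 0 := by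
  by_contra h
  obtain ⟨g1, g2⟩ := mem_of_haarI_ne h
  have e1 := floor_eq_of_mem h1 h2
  have e2 := floor_eq_of_mem g1 g2
  rw [e1] at e2
  exact hne (by exact_mod_cast e2.symm)

lemma sum_collapse' {k M : ℕ} {x : ℝ} (hM : M < 2^k)
    (h1 : (M:ℝ)*(2:ℝ)^(-(k:ℤ)) ≤ x) (h2 : x < ((M:ℝ)+1)*(2:ℝ)^(-(k:ℤ))) (f : ℕ → ℝ) :
    ∑ m ∈ Finset.range (2^k), f m * haarI k m x = f M * haarI k M x := by
  apply Finset.sum_eq_single_of_mem M (Finset.mem_range.2 hM)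
  intro i _ hne
  rw [haarI_eq_zero h1 h2 hne, mul_zero]

lemma zpow_split' {j l : ℕ} (hj : j ≤ l) :
    (2:ℝ)^(-(j:ℤ)) = (2:ℝ)^((l-j : ℕ)) * (2:ℝ)^(-(l:ℤ)) := by
  rw [← zpow_natCast (2:ℝ) (l-j), ← zpow_add₀ (by norm_num : (2:ℝ) ≠ 0)]
  congr 1
  omega

lemma scale_le {a b j l : ℕ} (hj : j ≤ l) (h : a * 2^(l-j) ≤ b) :
    (a:ℝ) * (2:ℝ)^(-(j:ℤ)) ≤ (b:ℝ) * (2:ℝ)^(-(l:ℤ)) := by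
  rw [zpow_split' hj, ← mul_assoc]
  apply mul_le_mul_of_nonneg_right _ (two_zpow_pos' _).le
  exact_mod_cast (by exact_mod_cast h : ((a * 2^(l-j) : ℕ):ℝ) ≤ (b:ℝ))

lemma scale_le' {a b j l : ℕ} (hj : j ≤ l) (h : b ≤ a * 2^(l-j)) :
    (b:ℝ) * (2:ℝ)^(-(l:ℤ)) ≤ (a:ℝ) * (2:ℝ)^(-(j:ℤ)) := by
  rw [zpow_split' hj, ← mul_assoc]
  apply mul_le_mul_of_nonneg_right _ (two_zpow_pos' _).le
  exact_mod_cast (by exact_mod_cast h : ((b:ℕ):ℝ) ≤ ((a * 2^(l-j) : ℕ):ℝ))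

lemma scale_lt {a b j l : ℕ} (hj : j ≤ l) (h : b < a * 2^(l-j)) :
    (b:ℝ) * (2:ℝ)^(-(l:ℤ)) < (a:ℝ) * (2:ℝ)^(-(j:ℤ)) := by
  rw [zpow_split' hj, ← mul_assoc]
  apply mul_lt_mul_of_pos_right _ (two_zpow_pos' _)
  exact_mod_cast (by exact_mod_cast h : ((b:ℕ):ℝ) < ((a * 2^(l-j) : ℕ):ℝ))

lemma half_eq (a j : ℕ) :
    ((a:ℝ) + 1/2) * (2:ℝ)^(-(j:ℤ)) = ((2*a+1 : ℕ):ℝ) * (2:ℝ)^(-((j+1:ℕ):ℤ)) := by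
  have : (2:ℝ)^(-(j:ℤ)) = 2 * (2:ℝ)^(-((j+1:ℕ):ℤ)) := by
    rw [show (-(j:ℤ)) = 1 + (-(((j+1:ℕ)):ℤ)) by push_cast; ring,
      zpow_add₀ (by norm_num : (2:ℝ) ≠ 0), zpow_one]
  rw [this]; push_cast; ring

/-- The greedy digit sequence for the attainment construction. -/
def sig (ε : ℕ → ℕ → ℕ → ℝ) (n : ℕ) : ℕ → ℕ
  | 0 => 0
  | j+1 => 2 * sig ε n j + (if ε (n - j) 0 (sig ε n j) = 1 then 0 else 1)

lemma sig_succ (ε : ℕ → ℕ → ℕ → ℝ) (n j : ℕ) :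
    sig ε n (j+1) = 2 * sig ε n j + (if ε (n - j) 0 (sig ε n j) = 1 then 0 else 1) := rfl

lemma sig_succ_bounds (ε : ℕ → ℕ → ℕ → ℝ) (n j : ℕ) :
    2 * sig ε n j ≤ sig ε n (j+1) ∧ sig ε n (j+1) ≤ 2 * sig ε n j + 1 := by
  rw [sig_succ]; split <;> omega

lemma sig_lt (ε : ℕ → ℕ → ℕ → ℝ) (n j : ℕ) : sig ε n j < 2^j := by
  induction j with
  | zero => simp [sig]
  | succ j ih =>
    calc sig ε n (j+1) ≤ 2 * sig ε n j + 1 := (sig_succ_bounds ε n j).2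
    _ < 2^(j+1) := by rw [pow_succ]; omega

lemma sig_bounds (ε : ℕ → ℕ → ℕ → ℝ) (n j d : ℕ) :
    sig ε n j * 2^d ≤ sig ε n (j+d) ∧ sig ε n (j+d) < (sig ε n j + 1) * 2^d := by
  induction d with
  | zero => simp
  | succ d ih =>
    have h1 : sig ε n (j+d+1) ≤ 2 * sig ε n (j+d) + 1 := (sig_succ_bounds ε n (j+d)).2
    have h2 : 2 * sig ε n (j+d) ≤ sig ε n (j+d+1) := (sig_succ_bounds ε n (j+d)).1
    have hp : (2:ℕ)^(d+1) = 2^d * 2 := by rw [pow_succ]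
    constructor
    · have := ih.1
      calc sig ε n j * 2^(d+1) = 2 * (sig ε n j * 2^d) := by rw [hp]; ring
      _ ≤ 2 * sig ε n (j+d) := by omega
      _ ≤ sig ε n (j+d+1) := h2
    · have := ih.2
      calc sig ε n (j+d+1) ≤ 2 * sig ε n (j+d) + 1 := h1
      _ < (sig ε n j + 1) * 2^(d+1) := by rw [hp]; nlinarith

lemma signedSum_eval (n : ℕ) (ε : ℕ → ℕ → ℕ → ℝ) (x y : ℝ) (Mx My : ℕ → ℕ)
    (hMx : ∀ k ≤ n, Mx k < 2^k) (hMy : ∀ k ≤ n, My k < 2^(n-k))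
    (hx1 : ∀ k ≤ n, (Mx k : ℝ) * (2:ℝ)^(-(k:ℤ)) ≤ x)
    (hx2 : ∀ k ≤ n, x < ((Mx k : ℝ)+1) * (2:ℝ)^(-(k:ℤ)))
    (hy1 : ∀ k ≤ n, (My k : ℝ) * (2:ℝ)^(-((n-k:ℕ):ℤ)) ≤ y)
    (hy2 : ∀ k ≤ n, y < ((My k : ℝ)+1) * (2:ℝ)^(-((n-k:ℕ):ℤ))) :
    signedSum n ε (x, y) = ∑ k ∈ Finset.range (n+1),
      ε k (Mx k) (My k) * haarI k (Mx k) x * haarI (n-k) (My k) y := by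
  unfold signedSum
  apply Finset.sum_congr rfl
  intro k hk
  have hk' : k ≤ n := Nat.lt_succ_iff.mp (Finset.mem_range.mp hk)
  have inner : ∀ m, ∑ m' ∈ Finset.range (2^(n-k)), ε k m m' * haarR k m (n-k) m' (x,y)
      = (ε k m (My k) * haarI (n-k) (My k) y) * haarI k m x := by
    intro m
    have e : ∀ m', ε k m m' * haarR k m (n-k) m' (x,y)
        = (fun m' => ε k m m' * haarI k m x) m' * haarI (n-k) m' y := by
      intro m'; simp only [haarR]; ring
    rw [Finset.sum_congr rfl (fun m' _ => e m'),
      sum_collapse' (hMy k hk') (hy1 k hk') (hy2 k hk')]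
    ring
  rw [Finset.sum_congr rfl (fun m _ => inner m),
    sum_collapse' (hMx k hk') (hx1 k hk') (hx2 k hk')]
  ring

lemma index_spec (k : ℕ) {t : ℝ} (h0 : 0 ≤ t) (h1 : t < 1) :
    ∃ M : ℕ, M < 2^k ∧ (M:ℝ) * (2:ℝ)^(-(k:ℤ)) ≤ t ∧ t < ((M:ℝ)+1) * (2:ℝ)^(-(k:ℤ)) := by
  have h2k : (0:ℝ) < (2:ℝ)^k := by positivity
  have hc : (2:ℝ)^(-(k:ℤ)) = ((2:ℝ)^k)⁻¹ := by rw [zpow_neg, zpow_natCast]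
  set z := ⌊(2:ℝ)^k * t⌋ with hz
  have hz0 : (0:ℤ) ≤ z := Int.floor_nonneg.2 (by positivity)
  have hzr : ((z.toNat : ℕ):ℝ) = (z:ℝ) := by exact_mod_cast Int.toNat_of_nonneg hz0
  have hle : (z:ℝ) ≤ (2:ℝ)^k * t := Int.floor_le _
  have hlt : (2:ℝ)^k * t < (z:ℝ) + 1 := Int.lt_floor_add_one _
  have key : (2:ℝ)^k * t * ((2:ℝ)^k)⁻¹ = t := by field_simp
  refine ⟨z.toNat, ?_, ?_, ?_⟩
  · have : (2:ℝ)^k * t < (2:ℝ)^k := by nlinarith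
    have hzk : z < (2:ℕ)^k := by
      rw [hz]
      exact Int.floor_lt.2 (by push_cast; linarith)
    omega
  · rw [hc, hzr]
    have := mul_le_mul_of_nonneg_right hle (inv_nonneg.2 h2k.le)
    linarith
  · rw [hc, hzr]
    have := mul_lt_mul_of_pos_right hlt (inv_pos.2 h2k)
    calc t = (2:ℝ)^k * t * ((2:ℝ)^k)⁻¹ := key.symm
    _ < ((z:ℝ) + 1) * ((2:ℝ)^k)⁻¹ := this
    _ = _ := rfl

/-- Sharp form of the two-dimensional signed small ball inequality: `|signedSum| ≤ n+1`
everywhere on the unit square, and the value `n+1` is attained on a set of positive measure. -/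
theorem sup_eq_n_add_one (n : ℕ) (ε : ℕ → ℕ → ℕ → ℝ)
    (hε : ∀ j m m', ε j m m' = 1 ∨ ε j m m' = -1) :
    (∀ p ∈ (Set.Ico (0:ℝ) 1) ×ˢ (Set.Ico (0:ℝ) 1), |signedSum n ε p| ≤ (n : ℝ) + 1) ∧
    0 < volume {p : ℝ × ℝ | p.1 ∈ Set.Ico (0:ℝ) 1 ∧ p.2 ∈ Set.Ico (0:ℝ) 1 ∧
        signedSum n ε p = (n : ℝ) + 1} := by
  have habs : ∀ j m m', |ε j m m'| = 1 := by
    intro j m m'; rcases hε j m m' with h | h <;> rw [h] <;> norm_num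
  constructor
  · rintro ⟨x, y⟩ ⟨⟨hx0, hx1⟩, hy0, hy1⟩
    choose Mx hMx hMx1 hMx2 using fun k : ℕ => index_spec k hx0 hx1
    choose My hMy hMy1 hMy2 using fun k : ℕ => index_spec (n-k) hy0 hy1
    rw [signedSum_eval n ε x y Mx My (fun k _ => hMx k) (fun k _ => hMy k)
      (fun k _ => hMx1 k) (fun k _ => hMx2 k) (fun k _ => hMy1 k) (fun k _ => hMy2 k)]
    calc |∑ k ∈ Finset.range (n+1), ε k (Mx k) (My k) * haarI k (Mx k) x * haarI (n-k) (My k) y|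
        ≤ ∑ k ∈ Finset.range (n+1), |ε k (Mx k) (My k) * haarI k (Mx k) x * haarI (n-k) (My k) y| :=
          Finset.abs_sum_le_sum_abs _ _
      _ ≤ ∑ k ∈ Finset.range (n+1), (1:ℝ) := by
          apply Finset.sum_le_sum
          intro k _
          rw [abs_mul, abs_mul, habs, one_mul]
          calc |haarI k (Mx k) x| * |haarI (n-k) (My k) y| ≤ 1 * 1 :=
            mul_le_mul (abs_haarI_le _ _ _) (abs_haarI_le _ _ _) (abs_nonneg _) zero_le_one
          _ = 1 := one_mul 1
      _ = (n:ℝ) + 1 := by rw [Finset.sum_const, Finset.card_range]; push_cast; ring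
  · -- attainment
    have hAlt : sig ε n (n+1) < 2^(n+1) := sig_lt ε n (n+1)
    set A := sig ε n (n+1) with hA
    set c : ℝ := (2:ℝ)^(-((n+1:ℕ):ℤ)) with hcdef
    have hcpos : 0 < c := two_zpow_pos' _
    have zmono : ∀ {j l : ℕ}, j ≤ l → (2:ℝ)^(-(l:ℤ)) ≤ (2:ℝ)^(-(j:ℤ)) := by
      intro j l hj
      have := scale_le' (a := 1) (b := 1) hj (by simpa using Nat.one_le_two_pow)
      simpa using this
    have hsub : (Set.Ico (0:ℝ) c) ×ˢ (Set.Ico ((A:ℝ)*c) (((A:ℝ)+1)*c)) ⊆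
        {p : ℝ × ℝ | p.1 ∈ Set.Ico (0:ℝ) 1 ∧ p.2 ∈ Set.Ico (0:ℝ) 1 ∧
          signedSum n ε p = (n : ℝ) + 1} := by
      rintro ⟨x, y⟩ ⟨⟨hx0, hxc⟩, hyA, hyA1⟩
      have hcle1 : c ≤ 1 := by
        rw [hcdef]
        simpa using zmono (Nat.zero_le (n+1))
      have hx1 : x < 1 := lt_of_lt_of_le hxc hcle1
      have hy0 : (0:ℝ) ≤ y := le_trans (by positivity) hyA
      have hy1 : y < 1 := by
        have h2 : ((A+1:ℕ):ℝ) * (2:ℝ)^(-((n+1:ℕ):ℤ)) ≤ ((1:ℕ):ℝ) * (2:ℝ)^(-((0:ℕ):ℤ)) :=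
          scale_le' (Nat.zero_le (n+1)) (by simpa using hAlt)
        rw [← hcdef] at h2
        push_cast at h2
        simp only [neg_zero, zpow_zero, mul_one] at h2
        linarith
      -- the y-side digit facts, level j ≤ n
      have yb : ∀ j, j ≤ n →
          ((sig ε n j : ℝ) * (2:ℝ)^(-(j:ℤ)) ≤ y ∧ y < ((sig ε n j : ℝ)+1) * (2:ℝ)^(-(j:ℤ))) ∧
          haarI j (sig ε n j) y = - ε (n-j) 0 (sig ε n j) := by
        intro j hj
        set s := sig ε n j with hs
        set s1 := sig ε n (j+1) with hs1
        have hjN : j + 1 ≤ n + 1 := by omega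
        have hb1 := sig_bounds ε n j (n+1-j)
        rw [show j + (n+1-j) = n+1 by omega] at hb1
        have hb2 := sig_bounds ε n (j+1) (n+1-(j+1))
        rw [show j+1 + (n+1-(j+1)) = n+1 by omega] at hb2
        have hylow : (s:ℝ) * (2:ℝ)^(-(j:ℤ)) ≤ y := by
          refine le_trans ?_ hyA
          rw [hcdef]
          exact scale_le (by omega) hb1.1
        have hyhigh : y < ((s:ℝ)+1) * (2:ℝ)^(-(j:ℤ)) := by
          have h4 := scale_le' (j := j) (l := n+1) (by omega)
            (show A+1 ≤ (s+1) * 2^(n+1-j) from hb1.2)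
          rw [← hcdef] at h4
          push_cast at h4
          linarith
        refine ⟨⟨hylow, hyhigh⟩, ?_⟩
        have hssucc : s1 = 2*s + (if ε (n-j) 0 s = 1 then 0 else 1) := sig_succ ε n j
        rcases hε (n-j) 0 s with hpos | hneg
        · -- sign +1 : left half
          have hs10 : s1 = 2*s := by rw [hssucc, if_pos hpos]; ring
          have h4 : A + 1 ≤ (2*s+1) * 2^(n+1-(j+1)) := by
            have h := hb2.2
            rw [← hs1, hs10, ← hA] at h
            exact h
          have h5 := scale_le' (j := j+1) (l := n+1) hjN h4
          rw [← hcdef] at h5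
          have hhalf : y < ((s:ℝ)+1/2) * (2:ℝ)^(-(j:ℤ)) := by
            rw [half_eq s j]
            push_cast at h5 ⊢
            linarith
          rw [haarI_neg hylow hhalf, hpos]
        · -- sign -1 : right half
          have hs10 : s1 = 2*s + 1 := by
            rw [hssucc, if_neg (by rw [hneg]; norm_num)]
          have h4 : (2*s+1) * 2^(n+1-(j+1)) ≤ A := by
            have h := hb2.1
            rw [← hs1, hs10, ← hA] at h
            exact h
          have h5 := scale_le (j := j+1) (l := n+1) hjN h4
          rw [← hcdef] at h5
          have hhalf : ((s:ℝ)+1/2) * (2:ℝ)^(-(j:ℤ)) ≤ y := by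
            rw [half_eq s j]
            push_cast at h5 ⊢
            linarith
          rw [haarI_pos hhalf hyhigh, hneg]
          norm_num
      -- x-side facts
      have xb : ∀ k, k ≤ n → haarI k 0 x = -1 := by
        intro k hk
        apply haarI_neg (by simpa using hx0)
        rw [show ((0:ℕ):ℝ) = (0:ℝ) from Nat.cast_zero, show (0:ℝ) + 1/2 = ((0:ℕ):ℝ) + 1/2 by norm_num,
          half_eq 0 k]
        calc x < c := hxc
        _ ≤ (2:ℝ)^(-((k+1:ℕ):ℤ)) := by rw [hcdef]; exact zmono (by omega)
        _ = ((2*0+1:ℕ):ℝ) * (2:ℝ)^(-((k+1:ℕ):ℤ)) := by norm_num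
      have hxmem : ∀ k, k ≤ n → ((0:ℕ):ℝ) * (2:ℝ)^(-(k:ℤ)) ≤ x ∧
          x < (((0:ℕ):ℝ)+1) * (2:ℝ)^(-(k:ℤ)) := by
        intro k hk
        constructor
        · simpa using hx0
        · have : x < (2:ℝ)^(-(k:ℤ)) :=
            lt_of_lt_of_le hxc (by rw [hcdef]; exact zmono (by omega))
          simpa using this
      have heval := signedSum_eval n ε x y (fun _ => 0) (fun k => sig ε n (n-k))
        (fun k _ => pow_pos (by norm_num : (0:ℕ) < 2) k)
        (fun k _ => sig_lt ε n (n-k))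
        (fun k hk => (hxmem k hk).1) (fun k hk => (hxmem k hk).2)
        (fun k hk => ((yb (n-k) (by omega)).1).1)
        (fun k hk => ((yb (n-k) (by omega)).1).2)
      refine ⟨⟨hx0, hx1⟩, ⟨hy0, hy1⟩, ?_⟩
      rw [heval]
      have hterm : ∀ k ∈ Finset.range (n+1),
          ε k 0 (sig ε n (n-k)) * haarI k 0 x * haarI (n-k) (sig ε n (n-k)) y = 1 := by
        intro k hk
        have hk' : k ≤ n := Nat.lt_succ_iff.mp (Finset.mem_range.mp hk)
        have h1 := (yb (n-k) (by omega)).2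
        rw [show n - (n-k) = k by omega] at h1
        rw [xb k hk', h1]
        rcases hε k 0 (sig ε n (n-k)) with h | h <;> rw [h] <;> ring
      rw [Finset.sum_congr rfl hterm, Finset.sum_const, Finset.card_range]
      push_cast; ring
    have hvol : (0 : ENNReal) < volume ((Set.Ico (0:ℝ) c) ×ˢ (Set.Ico ((A:ℝ)*c) (((A:ℝ)+1)*c))) := by
      rw [show (volume : Measure (ℝ × ℝ)) = (volume : Measure ℝ).prod volume from rfl,
        Measure.prod_prod, Real.volume_Ico, Real.volume_Ico]
      have h1 : (0:ℝ) < c - 0 := by linarith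
      have h2 : (0:ℝ) < ((A:ℝ)+1)*c - (A:ℝ)*c := by
        have e : ((A:ℝ)+1)*c - (A:ℝ)*c = c := by ring
        linarith
      exact ENNReal.mul_pos (by simpa using (ENNReal.ofReal_pos.2 h1).ne')
        (by simpa using (ENNReal.ofReal_pos.2 h2).ne')
    exact lt_of_lt_of_le hvol (measure_mono hsub)
end
end

section
/- There exist n ≥ 0, a dyadic rectangle Q ⊆ [0,1)² with |Q| < 2^{-n-1}, signs ε_R ∈ {-1,1}, and an integer k with 0 ≤ k ≤ n+1, such that the measure of {p ∈ Q : ∑_{|R|=2^{-n}} ε_R h_R(p) = n+1-2k} does not equal |Q|·2^{-(n+1)}·C(n+1,k). -/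
open MeasureTheory Finset

noncomputable section

/-- The hypothesis `|Q| ≥ 2^{-n-1}` in the main theorem is tight: for some `n`, some dyadic
rectangle `Q` of dimensions `2^{-a} × 2^{-b}` with `a + b > n + 1`, some signs and some `k`,
the level-set measure differs from `|Q|·2^{-(n+1)}·C(n+1,k)`. -/
theorem small_rectangle_counterexample :
    ∃ (n a b q1 q2 k : ℕ) (ε : ℕ → ℕ → ℕ → ℝ),
      n + 1 < a + b ∧ q1 < 2^a ∧ q2 < 2^b ∧ k ≤ n + 1 ∧
      (∀ j m m', ε j m m' = 1 ∨ ε j m m' = -1) ∧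
      volume {p : ℝ × ℝ | p ∈ (dyadicI a q1) ×ˢ (dyadicI b q2) ∧
          signedSum n ε p = (n : ℝ) + 1 - 2 * k}
        ≠ ENNReal.ofReal ((2:ℝ)^(-(a:ℤ)-(b:ℤ)) * ((n+1).choose k : ℝ) / 2^(n+1)) := by
  refine ⟨0, 1, 1, 0, 0, 0, fun _ _ _ => 1, by norm_num, by norm_num, by norm_num, by norm_num,
    fun _ _ _ => Or.inl rfl, ?_⟩
  have hd : dyadicI 1 0 = Set.Ico (0:ℝ) (1/2) := by
    norm_num [dyadicI]
  have hset : {p : ℝ × ℝ | p ∈ (dyadicI 1 0) ×ˢ (dyadicI 1 0) ∧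
      signedSum 0 (fun _ _ _ => 1) p = ((0:ℕ) : ℝ) + 1 - 2 * ((0:ℕ):ℝ)} =
      (Set.Ico (0:ℝ) (1/2)) ×ˢ (Set.Ico (0:ℝ) (1/2)) := by
    rw [hd]
    ext p
    simp only [Set.mem_setOf_eq, and_iff_left_iff_imp, Set.mem_prod, Set.mem_Ico]
    rintro ⟨⟨h1, h2⟩, ⟨h3, h4⟩⟩
    have e1 : haarI 0 0 p.1 = -1 := by
      have : p.1 ∈ Set.Ico (((0:ℕ):ℝ) * (2:ℝ)^(-((0:ℕ):ℤ))) ((((0:ℕ):ℝ) + 1/2) * (2:ℝ)^(-((0:ℕ):ℤ))) := by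
        simp only [Set.mem_Ico]; push_cast; norm_num; exact ⟨h1, h2⟩
      simp only [haarI, if_pos this]
    have e2 : haarI 0 0 p.2 = -1 := by
      have : p.2 ∈ Set.Ico (((0:ℕ):ℝ) * (2:ℝ)^(-((0:ℕ):ℤ))) ((((0:ℕ):ℝ) + 1/2) * (2:ℝ)^(-((0:ℕ):ℤ))) := by
        simp only [Set.mem_Ico]; push_cast; norm_num; exact ⟨h3, h4⟩
      simp only [haarI, if_pos this]
    simp [signedSum, haarR, e1, e2]
  rw [hset, Measure.volume_eq_prod, Measure.prod_prod, Real.volume_Ico,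
    ← ENNReal.ofReal_mul (by norm_num)]
  intro h
  rw [ENNReal.ofReal_eq_ofReal_iff (by norm_num) (by positivity)] at h
  norm_num at h
end
end

section
/- For every n ≥ 0 and every choice of signs ε_R ∈ {-1,1}, one has ‖∑_{|R|=2^{-n}} ε_R h_R‖_{L^∞([0,1)²)} ≥ n, i.e., there exists a set of positive measure on which |∑ ε_R h_R| ≥ n. -/
open MeasureTheory Finset

noncomputable section

namespace SSB

/-- scale `2^{-j}` -/
def tt (j : ℕ) : ℝ := (2:ℝ)^(-(j:ℤ))

lemma tt_pos (j : ℕ) : 0 < tt j := zpow_pos two_pos _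

lemma tt_succ (j : ℕ) : tt j = 2 * tt (j+1) := by
  simp only [tt]
  rw [show (-(↑(j+1):ℤ)) = -(j:ℤ) - 1 by push_cast; ring, zpow_sub₀ (two_ne_zero), zpow_one]
  ring

lemma tt_mono {j k : ℕ} (h : j ≤ k) : tt k ≤ tt j :=
  zpow_le_zpow_right₀ one_le_two (by omega)

lemma tt_le_one (j : ℕ) : tt j ≤ 1 := by
  have := tt_mono (Nat.zero_le j)
  simpa [tt] using this

/-- greedy digit sequence -/
def Mseq (n : ℕ) (ε : ℕ → ℕ → ℕ → ℝ) : ℕ → ℕ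
  | 0 => 0
  | j+1 => 2 * Mseq n ε j + (if ε (n-j) 0 (Mseq n ε j) = 1 then 0 else 1)

lemma Mseq_lt (n : ℕ) (ε : ℕ → ℕ → ℕ → ℝ) : ∀ j, Mseq n ε j < 2^j
  | 0 => by simp [Mseq]
  | j+1 => by
    have := Mseq_lt n ε j
    simp only [Mseq, pow_succ]
    split <;> omega

lemma nest (n : ℕ) (ε : ℕ → ℕ → ℕ → ℝ) (j : ℕ) : ∀ i,
    (Mseq n ε j : ℝ) * tt j ≤ (Mseq n ε (j+i) : ℝ) * tt (j+i) ∧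
    ((Mseq n ε (j+i) : ℝ)+1) * tt (j+i) ≤ ((Mseq n ε j : ℝ)+1) * tt j
  | 0 => by simp
  | i+1 => by
    obtain ⟨h1, h2⟩ := nest n ε j i
    set M := Mseq n ε (j+i) with hM
    have hstep : Mseq n ε (j+i+1) = 2 * M + (if ε (n-(j+i)) 0 M = 1 then 0 else 1) := rfl
    have ht : tt (j+i) = 2 * tt (j+i+1) := tt_succ _
    have htp := tt_pos (j+i+1)
    constructor
    · refine le_trans h1 ?_
      rw [show j+(i+1) = j+i+1 by ring, hstep]
      push_cast
      rw [ht]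
      split <;> push_cast <;> nlinarith
    · refine le_trans ?_ h2
      rw [show j+(i+1) = j+i+1 by ring, hstep]
      push_cast
      rw [ht]
      split <;> push_cast <;> nlinarith

lemma haarI_zero_left {k m : ℕ} {x : ℝ} (h : x < (m:ℝ) * tt k) : haarI k m x = 0 := by
  have h2 : ¬ ((m:ℝ) + 1/2) * tt k ≤ x := by
    have := tt_pos k
    intro hc; nlinarith
  simp only [haarI, Set.mem_Ico]
  rw [if_neg, if_neg] <;> simp only [tt] at * <;> intro hc <;>
    [exact h2 hc.1; exact absurd hc.1 (not_le.mpr h)]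

lemma haarI_zero_right {k m : ℕ} {x : ℝ} (h : ((m:ℝ)+1) * tt k ≤ x) : haarI k m x = 0 := by
  have htp := tt_pos k
  have h1 : ¬ x < (((m:ℝ) + 1/2) * tt k) := by intro hc; nlinarith
  have h2 : ¬ x < (((m:ℝ) + 1) * tt k) := not_lt.mpr h
  simp only [haarI, Set.mem_Ico]
  rw [if_neg, if_neg] <;> simp only [tt] at * <;> intro hc <;>
    [exact h2 hc.2; exact h1 hc.2]

lemma haarI_neg {k m : ℕ} {x : ℝ} (h1 : (m:ℝ) * tt k ≤ x) (h2 : x < ((m:ℝ)+1/2) * tt k) :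
    haarI k m x = -1 := by
  simp only [haarI, Set.mem_Ico, tt] at *
  rw [if_pos ⟨h1, h2⟩]

lemma haarI_pos {k m : ℕ} {x : ℝ} (h1 : ((m:ℝ)+1/2) * tt k ≤ x) (h2 : x < ((m:ℝ)+1) * tt k) :
    haarI k m x = 1 := by
  have htp := tt_pos k
  have h0 : ¬ x < ((m:ℝ)+1/2) * tt k := not_lt.mpr h1
  simp only [haarI, Set.mem_Ico, tt] at *
  rw [if_neg (fun hc => h0 hc.2), if_pos ⟨h1, h2⟩]


lemma signedSum_eq (n : ℕ) (ε : ℕ → ℕ → ℕ → ℝ) (hε : ∀ j m m', ε j m m' = 1 ∨ ε j m m' = -1)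
    {x y : ℝ} (hx0 : 0 ≤ x) (hx1 : x < tt (n+1))
    (hy0 : (Mseq n ε (n+1) : ℝ) * tt (n+1) ≤ y)
    (hy1 : y < ((Mseq n ε (n+1) : ℝ)+1) * tt (n+1)) :
    signedSum n ε (x, y) = n + 1 := by
  have key : ∀ k ∈ Finset.range (n+1),
      (∑ m ∈ Finset.range (2^k), ∑ m' ∈ Finset.range (2^(n-k)),
        ε k m m' * haarR k m (n-k) m' (x,y)) = 1 := by
    intro k hk
    have hkn : k ≤ n := Nat.lt_succ_iff.mp (Finset.mem_range.mp hk)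
    set j := n - k with hj
    have hnjk : n - j = k := by omega
    set M := Mseq n ε j with hMdef
    -- y bounds at level j and j+1
    have hyj : (M : ℝ) * tt j ≤ y ∧ y < ((M : ℝ)+1) * tt j := by
      obtain ⟨a, b⟩ := nest n ε j (n+1-j)
      rw [show j + (n+1-j) = n+1 by omega] at a b
      exact ⟨le_trans a hy0, lt_of_lt_of_le hy1 b⟩
    have hyj1 : (Mseq n ε (j+1) : ℝ) * tt (j+1) ≤ y ∧
        y < ((Mseq n ε (j+1) : ℝ)+1) * tt (j+1) := by
      obtain ⟨a, b⟩ := nest n ε (j+1) (n-j)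
      rw [show j + 1 + (n-j) = n+1 by omega] at a b
      exact ⟨le_trans a hy0, lt_of_lt_of_le hy1 b⟩
    have hsucc : tt j = 2 * tt (j+1) := tt_succ j
    have htp := tt_pos (j+1)
    -- haarI k 0 x = -1
    have hx : haarI k 0 x = -1 := by
      apply haarI_neg (by simpa using hx0)
      have h1 : tt (n+1) ≤ tt (k+1) := tt_mono (by omega)
      have h2 : tt k = 2 * tt (k+1) := tt_succ k
      push_cast
      nlinarith [tt_pos (k+1)]
    -- haarI j M y = -1 or 1 according to ε k 0 M, and the term is 1
    have hstep : (Mseq n ε (j+1) : ℝ) = 2 * (M:ℝ) + (if ε k 0 M = 1 then 0 else 1) := by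
      have : Mseq n ε (j+1) = 2 * M + (if ε (n-j) 0 M = 1 then 0 else 1) := rfl
      rw [this, hnjk]
      split <;> push_cast <;> ring
    -- reduce the m-sum to m = 0
    have hmzero : ∀ m ∈ Finset.range (2^k), m ≠ 0 →
        (∑ m' ∈ Finset.range (2^j), ε k m m' * haarR k m j m' (x,y)) = 0 := by
      intro m _ hm
      apply Finset.sum_eq_zero
      intro m' _
      have hxm : haarI k m x = 0 := by
        apply haarI_zero_left
        have h1 : tt (n+1) ≤ tt k := tt_mono (by omega)
        have h2 : (1:ℝ) ≤ (m:ℝ) := by exact_mod_cast Nat.one_le_iff_ne_zero.mpr hm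
        nlinarith [tt_pos k]
      simp [haarR, hxm]
    rw [Finset.sum_eq_single_of_mem 0 (Finset.mem_range.mpr (by positivity)) hmzero]
    -- reduce the m'-sum to m' = M
    have hm'zero : ∀ m' ∈ Finset.range (2^j), m' ≠ M →
        ε k 0 m' * haarR k 0 j m' (x,y) = 0 := by
      intro m' _ hm'
      have hym : haarI j m' y = 0 := by
        rcases lt_or_gt_of_ne hm' with h | h
        · apply haarI_zero_right
          have hle : ((m':ℝ)+1) ≤ (M:ℝ) := by exact_mod_cast h
          nlinarith [tt_pos j, hyj.1]
        · apply haarI_zero_left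
          have hle : ((M:ℝ)+1) ≤ (m':ℝ) := by exact_mod_cast h
          nlinarith [tt_pos j, hyj.2]
      simp [haarR, hym]
    rw [Finset.sum_eq_single_of_mem M (Finset.mem_range.mpr (Mseq_lt n ε j)) hm'zero]
    -- evaluate the surviving term
    rcases hε k 0 M with h1 | h1
    · rw [if_pos h1] at hstep
      have hy' : haarI j M y = -1 := by
        apply haarI_neg hyj.1
        have hb := hyj1.2
        rw [hstep] at hb
        rw [hsucc]
        nlinarith
      simp [haarR, hx, hy', h1]
    · rw [if_neg (by rw [h1]; norm_num)] at hstep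
      have hy' : haarI j M y = 1 := by
        have ha := hyj1.1
        have hb := hyj1.2
        rw [hstep] at ha hb
        apply haarI_pos
        · rw [hsucc]; nlinarith
        · rw [hsucc]; nlinarith
      simp [haarR, hx, hy', h1]
  rw [signedSum, Finset.sum_congr rfl key, Finset.sum_const, Finset.card_range]
  push_cast; ring

lemma tt_eq (j : ℕ) : tt j = ((2:ℝ)^j)⁻¹ := by rw [tt, zpow_neg, zpow_natCast]

end SSB

/-- The two-dimensional signed small ball inequality: `|signedSum| ≥ n` on a set of positive
measure, hence `‖signedSum‖_{L^∞} ≥ n`. -/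
theorem signed_small_ball_inequality (n : ℕ) (ε : ℕ → ℕ → ℕ → ℝ)
    (hε : ∀ j m m', ε j m m' = 1 ∨ ε j m m' = -1) :
    0 < volume {p : ℝ × ℝ | p.1 ∈ Set.Ico (0:ℝ) 1 ∧ p.2 ∈ Set.Ico (0:ℝ) 1 ∧
        (n : ℝ) ≤ |signedSum n ε p|} := by
  set t : ℝ := SSB.tt (n+1) with ht
  set M : ℕ := SSB.Mseq n ε (n+1) with hM
  have htp : 0 < t := SSB.tt_pos (n+1)
  have hsub : (Set.Ico (0:ℝ) t ×ˢ Set.Ico ((M:ℝ)*t) (((M:ℝ)+1)*t)) ⊆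
      {p : ℝ × ℝ | p.1 ∈ Set.Ico (0:ℝ) 1 ∧ p.2 ∈ Set.Ico (0:ℝ) 1 ∧
        (n : ℝ) ≤ |signedSum n ε p|} := by
    rintro ⟨px, py⟩ ⟨⟨hx0, hx1⟩, hy0, hy1⟩
    have hM1 : ((M:ℝ)+1) * t ≤ 1 := by
      have h1 : (M:ℝ)+1 ≤ 2^(n+1) := by exact_mod_cast SSB.Mseq_lt n ε (n+1)
      have h2 : (2:ℝ)^(n+1) * t = 1 := by
        rw [ht, SSB.tt_eq]
        field_simp
      nlinarith
    refine ⟨⟨hx0, lt_of_lt_of_le hx1 (SSB.tt_le_one _)⟩,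
      ⟨le_trans (by positivity) hy0, lt_of_lt_of_le hy1 hM1⟩, ?_⟩
    have := SSB.signedSum_eq n ε hε hx0 hx1 hy0 hy1
    simp only [Set.mem_setOf_eq, this]
    rw [abs_of_nonneg (by positivity)]
    linarith
  refine lt_of_lt_of_le ?_ (measure_mono hsub)
  rw [Measure.volume_eq_prod, Measure.prod_prod, Real.volume_Ico, Real.volume_Ico]
  apply ENNReal.mul_pos <;> simp only [ne_eq, ENNReal.ofReal_eq_zero, not_le] <;> nlinarith
end
end
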